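/- arXiv:1604.00793 — 4 statements merged into one kernel-verified Lean document; each statement's English description precedes it below -/
import Mathlib

section
/- Let m ≥ 0 and let U, V, Z be three Banach spaces. The space C^s_m(U, L(Z,V)) of maps f : U → L(Z,V) such that f(·)z ∈ C_m(U,V) for every z ∈ Z is a Banach space when endowed with the norm |f|_{C^s_m} := sup_{x∈U} ‖f(x)‖_{L(Z,V)}/(1+|x|^m). (In particular, this supremum is finite for every such f.) -/
open Set

/-- `f ∈ C_m(U,V)`: `f` is continuous and has at most polynomial growth of order `m`,
i.e. `sup_x ‖f x‖/(1+‖x‖^m) < ∞`. -/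
def MemCm {U V : Type*} [NormedAddCommGroup U] [NormedAddCommGroup V]
    (m : ℝ) (f : U → V) : Prop :=
  Continuous f ∧ ∃ C : ℝ, ∀ x : U, ‖f x‖ ≤ C * (1 + ‖x‖ ^ m)

/-- `F ∈ C^s_m(U, L(Z,V))`: for every `z ∈ Z`, the map `x ↦ F x z` belongs to `C_m(U,V)`. -/
def MemCsm {U Z V : Type*} [NormedAddCommGroup U]
    [NormedAddCommGroup Z] [NormedSpace ℝ Z]
    [NormedAddCommGroup V] [NormedSpace ℝ V] (m : ℝ) (F : U → Z →L[ℝ] V) : Prop :=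
  ∀ z : Z, MemCm m fun x => F x z

/-- for Banach spaces `U, V, Z` and `m ≥ 0`, the space
`C^s_m(U, L(Z,V))` is a Banach space with the norm `sup_x ‖F x‖_{L(Z,V)}/(1+‖x‖^m)`.
In particular this supremum is finite for every member, and the space is complete:
every Cauchy sequence (for this norm) converges in this norm to a member of the space. -/
theorem stmt0 {U Z V : Type*}
    [NormedAddCommGroup U] [NormedSpace ℝ U] [CompleteSpace U]
    [NormedAddCommGroup Z] [NormedSpace ℝ Z] [CompleteSpace Z]
    [NormedAddCommGroup V] [NormedSpace ℝ V] [CompleteSpace V]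
    (m : ℝ) (hm : 0 ≤ m) :
    (∀ F : U → Z →L[ℝ] V, MemCsm m F →
      BddAbove (Set.range fun x : U => ‖F x‖ / (1 + ‖x‖ ^ m))) ∧
    (∀ F : ℕ → U → Z →L[ℝ] V, (∀ n, MemCsm m (F n)) →
      (∀ ε : ℝ, 0 < ε → ∃ N : ℕ, ∀ p ≥ N, ∀ q ≥ N, ∀ x : U,
        ‖F p x - F q x‖ ≤ ε * (1 + ‖x‖ ^ m)) →
      ∃ Flim : U → Z →L[ℝ] V, MemCsm m Flim ∧
        ∀ ε : ℝ, 0 < ε → ∃ N : ℕ, ∀ n ≥ N, ∀ x : U,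
          ‖F n x - Flim x‖ ≤ ε * (1 + ‖x‖ ^ m)) := by
  have hpos : ∀ x : U, (0:ℝ) < 1 + ‖x‖ ^ m := fun x => by
    have := Real.rpow_nonneg (norm_nonneg x) m; linarith
  constructor
  · intro F hF
    set g : U → Z →L[ℝ] V := fun x => (1 + ‖x‖ ^ m)⁻¹ • F x with hg
    have hnorm : ∀ x, ‖g x‖ = ‖F x‖ / (1 + ‖x‖ ^ m) := by
      intro x
      rw [hg]
      simp only []
      rw [norm_smul (1 + ‖x‖ ^ m)⁻¹ (F x), Real.norm_eq_abs,
        abs_of_pos (inv_pos.2 (hpos x)), div_eq_inv_mul]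
    have hbd : ∀ z : Z, ∃ C, ∀ x : U, ‖g x z‖ ≤ C := by
      intro z
      obtain ⟨-, C, hC⟩ := hF z
      refine ⟨C, fun x => ?_⟩
      have h1 := hpos x
      have h2 : ‖g x z‖ = ‖F x z‖ / (1 + ‖x‖ ^ m) := by
        rw [hg]
        simp only [ContinuousLinearMap.smul_apply]
        rw [norm_smul (1 + ‖x‖ ^ m)⁻¹ (F x z), Real.norm_eq_abs,
          abs_of_pos (inv_pos.2 h1), div_eq_inv_mul]
      rw [h2, div_le_iff₀ h1]
      exact hC x
    obtain ⟨C', hC'⟩ := banach_steinhaus hbd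
    refine ⟨C', fun r hr => ?_⟩
    obtain ⟨x, rfl⟩ := hr
    show ‖F x‖ / (1 + ‖x‖ ^ m) ≤ C'
    rw [← hnorm x]
    exact hC' x
  · intro F hF hCauchy
    have hCseq : ∀ x : U, CauchySeq (fun n => F n x) := by
      intro x
      rw [Metric.cauchySeq_iff]
      intro δ hδ
      have ht := hpos x
      obtain ⟨N, hN⟩ := hCauchy (δ / (2 * (1 + ‖x‖ ^ m))) (by positivity)
      refine ⟨N, fun p hp q hq => ?_⟩
      rw [dist_eq_norm]
      have h1 := hN p hp q hq x
      have h2 : δ / (2 * (1 + ‖x‖ ^ m)) * (1 + ‖x‖ ^ m) = δ / 2 := by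
        field_simp
      rw [h2] at h1
      linarith
    have hlim : ∀ x : U, ∃ L, Filter.Tendsto (fun n => F n x) Filter.atTop (nhds L) :=
      fun x => cauchySeq_tendsto_of_complete (hCseq x)
    choose Flim hFlim using hlim
    have hkey : ∀ ε : ℝ, 0 < ε → ∃ N : ℕ, ∀ n ≥ N, ∀ x : U,
        ‖F n x - Flim x‖ ≤ ε * (1 + ‖x‖ ^ m) := by
      intro ε hε
      obtain ⟨N, hN⟩ := hCauchy ε hε
      refine ⟨N, fun n hn x => ?_⟩
      have htend : Filter.Tendsto (fun q => ‖F n x - F q x‖) Filter.atTop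
          (nhds ‖F n x - Flim x‖) := (Filter.Tendsto.sub tendsto_const_nhds (hFlim x)).norm
      exact le_of_tendsto htend (Filter.eventually_atTop.2 ⟨N, fun q hq => hN n hn q hq x⟩)
    refine ⟨Flim, ?_, hkey⟩
    intro z
    constructor
    · -- continuity
      have hTLU : TendstoLocallyUniformly (fun n x => F n x z) (fun x => Flim x z)
          Filter.atTop := by
        rw [Metric.tendstoLocallyUniformly_iff]
        intro ε hε x
        set K : ℝ := 1 + (‖x‖ + 1) ^ m with hK
        have hK0 : (0:ℝ) < K := by
          have : (0:ℝ) ≤ (‖x‖ + 1) ^ m := Real.rpow_nonneg (by positivity) m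
          linarith
        have hz1 : (0:ℝ) < ‖z‖ + 1 := by positivity
        obtain ⟨N, hN⟩ := hkey (ε / (2 * K * (‖z‖ + 1))) (by positivity)
        refine ⟨Metric.ball x 1, Metric.ball_mem_nhds x one_pos,
          Filter.eventually_atTop.2 ⟨N, fun n hn y hy => ?_⟩⟩
        have hy1 : ‖y‖ ≤ ‖x‖ + 1 := by
          have h := mem_ball_iff_norm.1 hy
          have := norm_sub_norm_le y x
          linarith
        have hbound : 1 + ‖y‖ ^ m ≤ K := by
          have := Real.rpow_le_rpow (norm_nonneg y) hy1 hm
          rw [hK]; linarith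
        have h1 : dist (Flim y z) (F n y z) = ‖F n y z - Flim y z‖ := dist_eq_norm' _ _
        rw [h1]
        have h2 : F n y z - Flim y z = (F n y - Flim y) z := by
          simp [ContinuousLinearMap.sub_apply]
        rw [h2]
        have h3 : ‖(F n y - Flim y) z‖ ≤ ‖F n y - Flim y‖ * ‖z‖ :=
          (F n y - Flim y).le_opNorm z
        have h4 := hN n hn y
        have h5 : ‖F n y - Flim y‖ * ‖z‖ ≤
            (ε / (2 * K * (‖z‖ + 1))) * (1 + ‖y‖ ^ m) * ‖z‖ :=
          mul_le_mul_of_nonneg_right h4 (norm_nonneg z)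
        have hε' : (0:ℝ) < ε / (2 * K * (‖z‖ + 1)) := by positivity
        have h6 : (ε / (2 * K * (‖z‖ + 1))) * (1 + ‖y‖ ^ m) * ‖z‖ ≤
            (ε / (2 * K * (‖z‖ + 1))) * K * (‖z‖ + 1) := by
          have hy0 : (0:ℝ) ≤ 1 + ‖y‖ ^ m := le_of_lt (hpos y)
          have := mul_le_mul (mul_le_mul_of_nonneg_left hbound (le_of_lt hε'))
            (by linarith [norm_nonneg z] : ‖z‖ ≤ ‖z‖ + 1) (norm_nonneg z)
            (by positivity : (0:ℝ) ≤ ε / (2 * K * (‖z‖ + 1)) * K)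
          linarith
        have h7 : (ε / (2 * K * (‖z‖ + 1))) * K * (‖z‖ + 1) = ε / 2 := by
          field_simp
        calc ‖(F n y - Flim y) z‖ ≤ ‖F n y - Flim y‖ * ‖z‖ := h3
          _ ≤ (ε / (2 * K * (‖z‖ + 1))) * (1 + ‖y‖ ^ m) * ‖z‖ := h5
          _ ≤ (ε / (2 * K * (‖z‖ + 1))) * K * (‖z‖ + 1) := h6
          _ = ε / 2 := h7
          _ < ε := by linarith
      exact hTLU.continuous (Filter.Eventually.of_forall fun n => (hF n z).1).frequently
    · -- growth bound
      obtain ⟨N, hN⟩ := hkey 1 one_pos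
      obtain ⟨-, C, hC⟩ := hF N z
      refine ⟨‖z‖ + C, fun x => ?_⟩
      have h1 : ‖Flim x z‖ ≤ ‖Flim x z - F N x z‖ + ‖F N x z‖ := by
        have := norm_add_le (Flim x z - F N x z) (F N x z)
        simpa using this
      have h2 : ‖Flim x z - F N x z‖ = ‖(F N x - Flim x) z‖ := by
        rw [ContinuousLinearMap.sub_apply, norm_sub_rev]
      have h3 : ‖(F N x - Flim x) z‖ ≤ ‖F N x - Flim x‖ * ‖z‖ :=
        (F N x - Flim x).le_opNorm z
      have h4 := hN N le_rfl x
      have h5 := hC x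
      have hz0 := norm_nonneg z
      have ht := hpos x
      calc ‖Flim x z‖ ≤ ‖Flim x z - F N x z‖ + ‖F N x z‖ := h1
        _ ≤ ‖F N x - Flim x‖ * ‖z‖ + C * (1 + ‖x‖ ^ m) := by rw [h2]; linarith
        _ ≤ (1 * (1 + ‖x‖ ^ m)) * ‖z‖ + C * (1 + ‖x‖ ^ m) := by nlinarith
        _ = (‖z‖ + C) * (1 + ‖x‖ ^ m) := by ring
end

section
/- Let A, σ ∈ ℝ with A ≠ 0, let Q_t := σ² ∫_0^t e^{2As} ds = σ²(e^{2At}−1)/(2A) for t ≥ 0, and define the one-dimensional Ornstein–Uhlenbeck semigroup R_t[φ](x) := ∫_ℝ φ(e^{At}x + y) dN(0,Q_t)(y) for φ ∈ C_b(ℝ), where N(0,Q_t) is the centered real Gaussian law of variance Q_t (the Dirac mass at 0 if Q_t = 0). Then the map [0,∞) → C_b(ℝ), t ↦ R_t[sin], is not continuous at any t ≥ 0 with respect to the supremum norm on C_b(ℝ). -/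
open MeasureTheory

/-- `Q_t = σ²(e^{2At} − 1)/(2A)`. -/
noncomputable def ouQ (A σ t : ℝ) : ℝ := σ ^ 2 * (Real.exp (2 * A * t) - 1) / (2 * A)

/-- The one-dimensional Ornstein–Uhlenbeck semigroup
`R_t[φ](x) = ∫_ℝ φ(e^{At} x + y) dN(0, Q_t)(y)`. -/
noncomputable def ouR (A σ : ℝ) (t : ℝ) (φ : ℝ → ℝ) (x : ℝ) : ℝ :=
  ∫ y, φ (Real.exp (A * t) * x + y) ∂(ProbabilityTheory.gaussianReal 0 (ouQ A σ t).toNNReal)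


open MeasureTheory Complex
open scoped NNReal ENNReal

lemma gauss_sin_integral (v c : ℝ) (hv : 0 < v) :
    ∫ y : ℝ, Real.exp (-y^2/(2*v)) * Real.sin (c + y)
      = Real.sqrt (2*Real.pi*v) * (Real.exp (-v/2) * Real.sin c) := by
  set b : ℂ := ((-(2*v)⁻¹ : ℝ) : ℂ) with hb_def
  have hbre : b.re < 0 := by
    have : (0:ℝ) < (2*v)⁻¹ := by positivity
    simp only [hb_def, Complex.ofReal_re]
    linarith
  have hInt := integrable_cexp_quadratic' hbre Complex.I (Complex.I * c)
  have him : ∀ y : ℝ, (Complex.exp (b * y^2 + Complex.I * y + Complex.I * c)).im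
      = Real.exp (-y^2/(2*v)) * Real.sin (c + y) := by
    intro y
    have hz : b * (y:ℂ)^2 + Complex.I * y + Complex.I * c
        = ((-y^2/(2*v) : ℝ) : ℂ) + ((y + c : ℝ) : ℂ) * Complex.I := by
      rw [hb_def]; push_cast; ring
    rw [hz, Complex.exp_im]
    simp only [Complex.add_re, Complex.ofReal_re, Complex.mul_I_re, Complex.ofReal_im,
      neg_zero, add_zero, Complex.add_im, Complex.mul_I_im, zero_add]
    rw [add_comm y c]
  have h1 := integral_im (𝕜 := ℂ) hInt
  simp only [RCLike.im_to_complex] at h1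
  rw [integral_cexp_quadratic hbre] at h1
  have h2 : (↑Real.pi / -b) = ((2*Real.pi*v : ℝ) : ℂ) := by
    rw [hb_def]
    have hv' : (v:ℂ) ≠ 0 := by exact_mod_cast hv.ne'
    push_cast
    rw [neg_neg]
    field_simp
  have h3 : ((2*Real.pi*v : ℝ) : ℂ) ^ (1/2 : ℂ) = ((Real.sqrt (2*Real.pi*v) : ℝ) : ℂ) := by
    rw [show (1/2 : ℂ) = ((1/2 : ℝ) : ℂ) by norm_num]
    rw [← Complex.ofReal_cpow (by positivity)]
    rw [Real.rpow_def_of_pos (by positivity), Real.sqrt_eq_rpow,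
      Real.rpow_def_of_pos (by positivity)]
  have h4 : Complex.I * ↑c - Complex.I ^ 2 / (4 * b) = ((-v/2 : ℝ) : ℂ) + Complex.I * c := by
    rw [hb_def, Complex.I_sq]
    push_cast
    have : (v:ℂ) ≠ 0 := by exact_mod_cast hv.ne'
    field_simp
    ring
  rw [h2, h3, h4] at h1
  have h5 : ((((Real.sqrt (2*Real.pi*v)) : ℝ) : ℂ) * Complex.exp (((-v/2 : ℝ) : ℂ) + Complex.I * c)).im
      = Real.sqrt (2*Real.pi*v) * (Real.exp (-v/2) * Real.sin c) := by
    rw [show Complex.I * (c:ℂ) = ((c:ℝ):ℂ) * Complex.I by rw [mul_comm]]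
    simp only [Complex.mul_im, Complex.ofReal_re, Complex.ofReal_im, zero_mul, add_zero]
    rw [Complex.exp_im]
    simp only [Complex.add_re, Complex.ofReal_re, Complex.mul_I_re, Complex.ofReal_im,
      neg_zero, add_zero, Complex.add_im, Complex.mul_I_im, zero_add]
  rw [h5] at h1
  rw [← h1]
  congr 1
  ext y
  rw [him y]

open ProbabilityTheory in
lemma integral_sin_gaussianReal (v : ℝ≥0) (c : ℝ) :
    ∫ y, Real.sin (c + y) ∂(gaussianReal 0 v) = Real.exp (-(v:ℝ)/2) * Real.sin c := by
  rcases eq_or_ne v 0 with hv | hv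
  · subst hv
    simp [integral_dirac]
  · have hvr : (0:ℝ) < v := NNReal.coe_pos.mpr (pos_iff_ne_zero.mpr hv)
    rw [gaussianReal_of_var_ne_zero _ hv]
    have hmeas : Measurable fun y => (gaussianPDFReal 0 v y).toNNReal :=
      (measurable_gaussianPDFReal 0 v).real_toNNReal
    have hd : gaussianPDF 0 v = fun y => (((gaussianPDFReal 0 v y).toNNReal : ℝ≥0) : ℝ≥0∞) := rfl
    rw [hd, integral_withDensity_eq_integral_smul hmeas]
    have hco : ∀ y : ℝ, ((gaussianPDFReal 0 v y).toNNReal : ℝ) • Real.sin (c + y)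
        = (Real.sqrt (2*Real.pi*(v:ℝ)))⁻¹ * (Real.exp (-y^2/(2*(v:ℝ))) * Real.sin (c + y)) := by
      intro y
      rw [smul_eq_mul, Real.coe_toNNReal _ (gaussianPDFReal_nonneg 0 v y), gaussianPDFReal]
      ring_nf
    simp only [NNReal.smul_def, hco]
    rw [integral_const_mul, gauss_sin_integral _ _ hvr]
    have hs : Real.sqrt (2*Real.pi*(v:ℝ)) ≠ 0 := by positivity
    rw [inv_mul_cancel_left₀ hs]

lemma two_point (cs ct as b r : ℝ) (hct : 0 ≤ ct) (has : as ≠ 0) (hb : b ≠ 0)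
    (hr : b = as * r) (n : ℤ) (hn : (n:ℝ) * r = 1/4 + n) :
    ∃ x₁ x₂ : ℝ, ct * Real.sqrt 2 ≤
      |cs * Real.sin (as*x₁) - ct * Real.sin (b*x₁)|
        + |cs * Real.sin (as*x₂) - ct * Real.sin (b*x₂)| := by
  set π := Real.pi
  refine ⟨-π/(4*b), -π/(4*b) + n*(2*π/as), ?_⟩
  have h1 : as * (-π/(4*b)) = as * (-π/(4*b)) := rfl
  have h2 : as * (-π/(4*b) + n*(2*π/as)) = as * (-π/(4*b)) + n * (2*π) := by
    field_simp
  have h3 : b * (-π/(4*b)) = -(π/4) := by field_simp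
  have h4 : b * (-π/(4*b) + n*(2*π/as)) = π/4 + n * (2*π) := by
    have : b * (n*(2*π/as)) = ((n:ℝ)*r) * (2*π) := by
      rw [hr]; field_simp
    rw [mul_add, h3, this, hn]
    ring
  rw [h2, h3, h4, Real.sin_add_int_mul_two_pi, Real.sin_add_int_mul_two_pi,
    Real.sin_neg, Real.sin_pi_div_four]
  have key : (cs * Real.sin (as * (-π/(4*b))) - ct * (Real.sqrt 2 / 2))
      - (cs * Real.sin (as * (-π/(4*b))) - ct * -(Real.sqrt 2 / 2)) = -(ct * Real.sqrt 2) := by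
    ring
  calc ct * Real.sqrt 2
      = |(cs * Real.sin (as * (-π/(4*b))) - ct * (Real.sqrt 2 / 2))
          - (cs * Real.sin (as * (-π/(4*b))) - ct * -(Real.sqrt 2 / 2))| := by
        rw [key, abs_neg]
        exact (_root_.abs_of_nonneg (by positivity)).symm
    _ ≤ _ := by
        rw [abs_sub_comm]
        exact (abs_sub _ _)

lemma ouR_sin (A σ t x : ℝ) :
    ouR A σ t Real.sin x
      = Real.exp (-(((ouQ A σ t).toNNReal : ℝ))/2) * Real.sin (Real.exp (A*t) * x) := by
  unfold ouR
  exact integral_sin_gaussianReal _ _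

lemma log_bound {x : ℝ} (hx : |x| ≤ 1/4) : |Real.log (1+x)| ≤ 2*|x| := by
  have h1 : -(1/4 : ℝ) ≤ x := (abs_le.mp hx).1
  have h2 : x ≤ 1/4 := (abs_le.mp hx).2
  have hp : (0:ℝ) < 1 + x := by linarith
  rcases abs_cases (Real.log (1+x)) with ⟨he, _⟩ | ⟨he, _⟩ <;> rw [he]
  · have hl := Real.log_le_sub_one_of_pos hp
    have hax := le_abs_self x
    have := abs_nonneg x
    linarith
  · have hinv : (0:ℝ) < (1+x)⁻¹ := by positivity
    have hl : Real.log ((1+x)⁻¹) ≤ (1+x)⁻¹ - 1 := Real.log_le_sub_one_of_pos hinv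
    rw [Real.log_inv] at hl
    have heq : (1+x)⁻¹ - 1 = -x/(1+x) := by field_simp; ring
    rw [heq] at hl
    have hgoal : -x/(1+x) ≤ 2*|x| := by
      rw [div_le_iff₀ hp]
      nlinarith [le_abs_self x, neg_abs_le x, abs_nonneg x]
    linarith

/-- for `A ≠ 0`, the map `t ↦ R_t[sin]` from `[0,∞)` to `C_b(ℝ)` is not
continuous at any `t ≥ 0` with respect to the supremum norm (continuity at `t` within
`[0,∞)` being expressed in the usual `ε`-`δ` form for the sup distance). -/
theorem stmt10 (A σ : ℝ) (hA : A ≠ 0) :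
    ∀ t : ℝ, 0 ≤ t →
      ¬ (∀ ε : ℝ, 0 < ε → ∃ δ : ℝ, 0 < δ ∧ ∀ s : ℝ, 0 ≤ s → |s - t| < δ →
          ∀ x : ℝ, |ouR A σ s Real.sin x - ouR A σ t Real.sin x| ≤ ε) := by
  intro t ht h
  set ct := Real.exp (-(((ouQ A σ t).toNNReal : ℝ))/2) with hct_def
  have hct : 0 < ct := Real.exp_pos _
  obtain ⟨δ, hδ, H⟩ := h (ct/4) (by positivity)
  have hA' : 0 < |A| := abs_pos.mpr hA
  obtain ⟨m0, hm0⟩ := exists_nat_gt (1/(δ * |A|))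
  set m : ℕ := m0 + 1 with hm_def
  have hm0' : (0:ℝ) ≤ m0 := Nat.cast_nonneg m0
  have hm1 : (1:ℝ) ≤ (m:ℝ) := by rw [hm_def]; push_cast; linarith
  have hmpos : (0:ℝ) < m := by linarith
  have hmgt : 1/(δ*|A|) < (m:ℝ) := by rw [hm_def]; push_cast; linarith
  set n : ℤ := if 0 < A then -(m:ℤ) else (m:ℤ) with hn_def
  have hnabs : |(n:ℝ)| = (m:ℝ) := by
    rw [hn_def]; split_ifs <;> simp [Nat.abs_cast]
  have hnne : (n:ℝ) ≠ 0 := by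
    intro h0; rw [h0, abs_zero] at hnabs; linarith
  set r : ℝ := 1 + 1/(4*(n:ℝ)) with hr_def
  have habs4 : |1/(4*(n:ℝ))| = 1/(4*(m:ℝ)) := by
    rw [abs_div, abs_mul, hnabs, abs_one]; norm_num
  have hx4 : |1/(4*(n:ℝ))| ≤ 1/4 := by
    rw [habs4]
    exact one_div_le_one_div_of_le (by norm_num) (by linarith)
  have hr_pos : 0 < r := by
    have := (abs_le.mp hx4).1
    rw [hr_def]; linarith
  have hnr : (n:ℝ) * r = 1/4 + n := by
    rw [hr_def]; field_simp; ring
  have hsign : Real.log r / A ≤ 0 := by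
    rcases lt_trichotomy A 0 with hA1 | hA1 | hA1
    · have hn_pos : (0:ℝ) < (n:ℝ) := by
        rw [hn_def, if_neg (not_lt.mpr hA1.le)]; push_cast; linarith
      have hr1 : 1 ≤ r := by
        rw [hr_def]
        have : 0 < 1/(4*(n:ℝ)) := by positivity
        linarith
      exact div_nonpos_of_nonneg_of_nonpos (Real.log_nonneg hr1) hA1.le
    · exact absurd hA1 hA
    · have hn_neg : (n:ℝ) < 0 := by
        rw [hn_def, if_pos hA1]; push_cast; linarith
      have hr1 : r ≤ 1 := by
        rw [hr_def]
        have : 1/(4*(n:ℝ)) ≤ 0 := by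
          apply div_nonpos_of_nonneg_of_nonpos <;> linarith
        linarith
      exact div_nonpos_of_nonpos_of_nonneg (Real.log_nonpos hr_pos.le hr1) hA1.le
  set s : ℝ := t - Real.log r / A with hs_def
  have hs0 : 0 ≤ s := by rw [hs_def]; linarith
  have hlogb : |Real.log r| ≤ 2 * |1/(4*(n:ℝ))| := log_bound hx4
  have hdist : |s - t| < δ := by
    rw [hs_def, show t - Real.log r / A - t = -(Real.log r / A) by ring, abs_neg, abs_div]
    rw [div_lt_iff₀ hA']
    have h1m : 1/(m:ℝ) < δ * |A| := by
      rw [div_lt_iff₀ hmpos]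
      have hda : 0 < δ * |A| := by positivity
      calc (1:ℝ) = (δ*|A|) * (1/(δ*|A|)) := by field_simp
        _ < (δ*|A|) * m := by
            apply mul_lt_mul_of_pos_left hmgt hda
        _ = δ * |A| * m := by ring
    have : 2 * |1/(4*(n:ℝ))| ≤ 1/(m:ℝ) := by
      rw [habs4, show 2 * (1/(4*(m:ℝ))) = 1/(2*(m:ℝ)) by field_simp; ring]
      exact one_div_le_one_div_of_le hmpos (by linarith)
    linarith
  set b := Real.exp (A*t) with hb_def
  set as := Real.exp (A*s) with has_def
  have hbr : b = as * r := by
    rw [has_def, hs_def, show A * (t - Real.log r / A) = A*t - Real.log r by field_simp,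
      Real.exp_sub, Real.exp_log hr_pos, hb_def]
    field_simp
  set cs := Real.exp (-(((ouQ A σ s).toNNReal : ℝ))/2) with hcs_def
  obtain ⟨x₁, x₂, hkey⟩ := two_point cs ct as b r hct.le (Real.exp_ne_zero _)
    (Real.exp_ne_zero _) hbr n hnr
  have h1 := H s hs0 hdist x₁
  have h2 := H s hs0 hdist x₂
  rw [ouR_sin, ouR_sin] at h1 h2
  rw [← hb_def, ← has_def, ← hcs_def, ← hct_def] at h1 h2
  have hsqrt : (1:ℝ) ≤ Real.sqrt 2 := by
    rw [show (1:ℝ) = Real.sqrt 1 by simp]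
    exact Real.sqrt_le_sqrt (by norm_num)
  nlinarith [hkey, h1, h2, hct, hsqrt]
end

section
/- Let A, σ ∈ ℝ with A ≠ 0, let Q_t := σ²(e^{2At}−1)/(2A) for t ≥ 0, and define R_t[φ](x) := ∫_ℝ φ(e^{At}x + y) dN(0,Q_t)(y) for φ ∈ C_b(ℝ). Then there exists φ ∈ C_b(ℝ) such that for every T > 0 the map [0,T] → C_b(ℝ), t ↦ R_t[φ], is not strongly measurable (i.e., it is not the almost-everywhere limit of a sequence of finitely-valued functions [0,T] → C_b(ℝ)). -/
open MeasureTheory Set Complex ProbabilityTheory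
open scoped ENNReal NNReal Real

lemma integral_sin_gaussian (v : ℝ≥0) (m : ℝ) :
    ∫ y, Real.sin (m + y) ∂(gaussianReal 0 v) = Real.exp (-(v:ℝ)/2) * Real.sin m := by
  rcases eq_or_ne v 0 with rfl | hv
  · simp [gaussianReal_zero_var, MeasureTheory.integral_dirac]
  · have hv' : (0:ℝ) < (v:ℝ) := by exact_mod_cast pos_iff_ne_zero.mpr hv
    rw [gaussianReal_of_var_ne_zero _ hv]
    have hd : gaussianPDF 0 v = fun x => ((Real.toNNReal (gaussianPDFReal 0 v x) : ℝ≥0) : ℝ≥0∞) := by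
      funext x; rfl
    rw [hd, integral_withDensity_eq_integral_smul
      ((measurable_gaussianPDFReal 0 v).real_toNNReal) _]
    have hsm : ∀ x : ℝ, (Real.toNNReal (gaussianPDFReal 0 v x)) • Real.sin (m + x)
        = gaussianPDFReal 0 v x * Real.sin (m + x) := by
      intro x
      rw [NNReal.smul_def, Real.coe_toNNReal _ (gaussianPDFReal_nonneg _ _ _), smul_eq_mul]
    simp_rw [hsm]
    -- now the real computation
    set c : ℝ := (Real.sqrt (2 * π * (v:ℝ)))⁻¹ with hc
    set bR : ℝ := -(1 / (2 * (v:ℝ))) with hbR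
    set b : ℂ := (bR : ℂ) with hb
    have hbre : b.re < 0 := by
      simp only [hb, Complex.ofReal_re, hbR]
      rw [neg_lt, neg_zero]
      positivity
    have hs : (0:ℝ) < Real.sqrt (2 * π * (v:ℝ)) := Real.sqrt_pos.mpr (by positivity)
    have hg : ∀ x : ℝ, ((gaussianPDFReal 0 v x : ℝ) : ℂ) * Complex.exp (((m + x : ℝ) : ℂ) * I)
        = (c : ℂ) * Complex.exp ((m:ℂ) * I) * Complex.exp (b * (x:ℂ)^2 + I * (x:ℂ) + 0) := by
      intro x
      have hrhs : (c : ℂ) * Complex.exp ((m:ℂ) * I) * Complex.exp (b * (x:ℂ)^2 + I * (x:ℂ) + 0)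
          = (c : ℂ) * Complex.exp ((m:ℂ) * I + (b * (x:ℂ)^2 + I * (x:ℂ) + 0)) := by
        simp [Complex.exp_add]; ring
      rw [hrhs, gaussianPDFReal]
      push_cast
      rw [mul_assoc, ← Complex.exp_add]
      have hvne : ((v:ℂ)) ≠ 0 := by exact_mod_cast hv'.ne'
      congr 1
      · rw [hc]; push_cast; ring_nf
      · congr 1
        rw [hb, hbR]
        push_cast
        field_simp
        ring
    have hint0 : Integrable (fun x : ℝ => Complex.exp (b * (x:ℂ)^2 + I * (x:ℂ) + 0)) :=
      integrable_cexp_quadratic' hbre I 0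
    have hgfun : (fun x : ℝ => ((gaussianPDFReal 0 v x : ℝ) : ℂ) * Complex.exp (((m + x : ℝ) : ℂ) * I))
        = fun x : ℝ => (c : ℂ) * Complex.exp ((m:ℂ) * I) * Complex.exp (b * (x:ℂ)^2 + I * (x:ℂ) + 0) :=
      funext hg
    have hint : Integrable (fun x : ℝ => ((gaussianPDFReal 0 v x : ℝ) : ℂ)
        * Complex.exp (((m + x : ℝ) : ℂ) * I)) := by
      rw [hgfun]; exact hint0.const_mul _
    have him : ∀ x : ℝ, gaussianPDFReal 0 v x * Real.sin (m + x)
        = (((gaussianPDFReal 0 v x : ℝ) : ℂ) * Complex.exp (((m + x : ℝ) : ℂ) * I)).im := by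
      intro x
      simp [Complex.mul_im, Complex.exp_im, Complex.exp_re, Complex.mul_re]
    calc ∫ x : ℝ, gaussianPDFReal 0 v x * Real.sin (m + x)
        = ∫ x : ℝ, (((gaussianPDFReal 0 v x : ℝ) : ℂ) * Complex.exp (((m + x : ℝ) : ℂ) * I)).im := by
          simp_rw [him]
      _ = (∫ x : ℝ, ((gaussianPDFReal 0 v x : ℝ) : ℂ) * Complex.exp (((m + x : ℝ) : ℂ) * I)).im :=
          integral_im hint
      _ = ((c : ℂ) * Complex.exp ((m:ℂ) * I) * ∫ x : ℝ, Complex.exp (b * (x:ℂ)^2 + I * (x:ℂ) + 0)).im := by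
          rw [hgfun, MeasureTheory.integral_const_mul]
      _ = Real.exp (-(v:ℝ)/2) * Real.sin m := by
          rw [integral_cexp_quadratic hbre I 0]
          have h1 : (0:ℂ) - I^2 / (4*b) = ((-(v:ℝ)/2 : ℝ) : ℂ) := by
            rw [Complex.I_sq, hb, hbR]
            have : ((v:ℂ)) ≠ 0 := by exact_mod_cast hv'.ne'
            push_cast
            field_simp
            ring
          have h2 : ((π:ℂ)/(-b))^(1/2 : ℂ) = ((Real.sqrt (2 * π * (v:ℝ)) : ℝ) : ℂ) := by
            have hpb : ((π:ℂ)/(-b)) = ((2 * π * (v:ℝ) : ℝ) : ℂ) := by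
              rw [hb, hbR]
              have : ((v:ℂ)) ≠ 0 := by exact_mod_cast hv'.ne'
              push_cast
              field_simp
            rw [hpb]
            rw [show ((1:ℂ)/2) = (((1/2 : ℝ) : ℂ)) by norm_num]
            rw [← Complex.ofReal_cpow (by positivity)]
            norm_cast
            rw [← Real.sqrt_eq_rpow]
          rw [h1, h2, ← Complex.ofReal_exp]
          have hfold : (c : ℂ) * Complex.exp ((m:ℂ) * I)
              * (((Real.sqrt (2 * π * (v:ℝ)) : ℝ) : ℂ) * ((Real.exp (-(v:ℝ)/2) : ℝ) : ℂ))
              = ((Real.exp (-(v:ℝ)/2) : ℝ) : ℂ) * Complex.exp ((m:ℂ) * I) := by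
            have hcs : (c : ℝ) * Real.sqrt (2 * π * (v:ℝ)) = 1 := inv_mul_cancel₀ hs.ne'
            have hcs' : ((c : ℝ) : ℂ) * ((Real.sqrt (2 * π * (v:ℝ)) : ℝ) : ℂ) = 1 := by
              exact_mod_cast hcs
            calc (c : ℂ) * Complex.exp ((m:ℂ) * I)
                * (((Real.sqrt (2 * π * (v:ℝ)) : ℝ) : ℂ) * ((Real.exp (-(v:ℝ)/2) : ℝ) : ℂ))
                = (((c : ℝ) : ℂ) * ((Real.sqrt (2 * π * (v:ℝ)) : ℝ) : ℂ))
                  * (((Real.exp (-(v:ℝ)/2) : ℝ) : ℂ) * Complex.exp ((m:ℂ) * I)) := by ring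
              _ = ((Real.exp (-(v:ℝ)/2) : ℝ) : ℂ) * Complex.exp ((m:ℂ) * I) := by
                  rw [hcs', one_mul]
          rw [hfold]
          simp [Complex.mul_im, Complex.exp_im, Complex.exp_re, Complex.mul_re]

lemma sep_lemma {a b c1 c2 ε : ℝ} (ha : 0 < a) (hb : 0 < b) (hab : a ≠ b)
    (hε : 0 < ε) (h1l : ε ≤ c1) (h1u : c1 ≤ 1) (h2l : ε ≤ c2) (h2u : c2 ≤ 1) :
    ∃ x : ℝ, ε/2 < |c1 * Real.sin (a*x) - c2 * Real.sin (b*x)| := by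
  by_contra hcon
  push_neg at hcon
  have habmb : a - b ≠ 0 := sub_ne_zero.mpr hab
  have hapb : a + b ≠ 0 := by positivity
  obtain ⟨C0, hC0'⟩ : ∃ C0:ℝ, C0 = 1/(2*a) + 1/(2*b) + 1/|a-b| + 1/|a+b| := ⟨_, rfl⟩
  have hC0nn : 0 ≤ C0 := by
    rw [hC0']
    have h1 : (0:ℝ) < |a-b| := _root_.abs_pos.mpr habmb
    have h2 : (0:ℝ) < |a+b| := _root_.abs_pos.mpr hapb
    positivity
  obtain ⟨L, hL, hLε⟩ : ∃ L:ℝ, 0 < L ∧ L * ε^2 = 4*(C0+1) :=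
    ⟨4*(C0+1)/ε^2, div_pos (by linarith) (by positivity),
      div_mul_cancel₀ _ (pow_ne_zero 2 hε.ne')⟩
  -- cosine integral
  have hcos : ∀ c : ℝ, c ≠ 0 → ∫ x in (0:ℝ)..L, Real.cos (c*x) = Real.sin (c*L)/c := by
    intro c hc
    rw [intervalIntegral.integral_comp_mul_left Real.cos hc, mul_zero, integral_cos,
      Real.sin_zero, sub_zero, smul_eq_mul]
    ring
  -- pointwise expansion
  have hpt : ∀ x : ℝ, (c1 * Real.sin (a*x) - c2 * Real.sin (b*x))^2
      = (c1^2+c2^2)/2 - (c1^2/2) * Real.cos (2*a*x) - (c2^2/2) * Real.cos (2*b*x)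
        - (c1*c2) * Real.cos ((a-b)*x) + (c1*c2) * Real.cos ((a+b)*x) := by
    intro x
    rw [show (a-b)*x = a*x - b*x by ring, show (a+b)*x = a*x + b*x by ring,
      show 2*a*x = 2*(a*x) by ring, show 2*b*x = 2*(b*x) by ring,
      Real.cos_sub, Real.cos_add, Real.cos_two_mul, Real.cos_two_mul]
    have p1 := Real.sin_sq_add_cos_sq (a*x)
    have p2 := Real.sin_sq_add_cos_sq (b*x)
    linear_combination c1^2 * p1 + c2^2 * p2
  have ia1 : IntervalIntegrable (fun x:ℝ => (c1^2/2) * Real.cos (2*a*x)) volume 0 L :=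
    Continuous.intervalIntegrable (by fun_prop) _ _
  have ia2 : IntervalIntegrable (fun x:ℝ => (c2^2/2) * Real.cos (2*b*x)) volume 0 L :=
    Continuous.intervalIntegrable (by fun_prop) _ _
  have ia3 : IntervalIntegrable (fun x:ℝ => (c1*c2) * Real.cos ((a-b)*x)) volume 0 L :=
    Continuous.intervalIntegrable (by fun_prop) _ _
  have ia4 : IntervalIntegrable (fun x:ℝ => (c1*c2) * Real.cos ((a+b)*x)) volume 0 L :=
    Continuous.intervalIntegrable (by fun_prop) _ _
  have ic : IntervalIntegrable (fun _:ℝ => (c1^2+c2^2)/2) volume 0 L :=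
    intervalIntegrable_const
  have hkey : ∫ x in (0:ℝ)..L, (c1 * Real.sin (a*x) - c2 * Real.sin (b*x))^2
      = (c1^2+c2^2)*L/2 - (c1^2/2) * (Real.sin (2*a*L)/(2*a))
        - (c2^2/2) * (Real.sin (2*b*L)/(2*b))
        - (c1*c2) * (Real.sin ((a-b)*L)/(a-b)) + (c1*c2) * (Real.sin ((a+b)*L)/(a+b)) := by
    simp_rw [hpt]
    rw [intervalIntegral.integral_add (((ic.sub ia1).sub ia2).sub ia3) ia4,
      intervalIntegral.integral_sub ((ic.sub ia1).sub ia2) ia3,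
      intervalIntegral.integral_sub (ic.sub ia1) ia2,
      intervalIntegral.integral_sub ic ia1,
      intervalIntegral.integral_const,
      intervalIntegral.integral_const_mul, intervalIntegral.integral_const_mul,
      intervalIntegral.integral_const_mul, intervalIntegral.integral_const_mul,
      hcos _ (by positivity), hcos _ (by positivity), hcos _ habmb, hcos _ hapb]
    simp only [smul_eq_mul, sub_zero]
    ring
  -- upper bound
  have hf2 : IntervalIntegrable (fun x:ℝ => (c1 * Real.sin (a*x) - c2 * Real.sin (b*x))^2)
      volume 0 L := Continuous.intervalIntegrable (by fun_prop) _ _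
  have hub : ∫ x in (0:ℝ)..L, (c1 * Real.sin (a*x) - c2 * Real.sin (b*x))^2
      ≤ (ε/2)^2 * L := by
    calc ∫ x in (0:ℝ)..L, (c1 * Real.sin (a*x) - c2 * Real.sin (b*x))^2
        ≤ ∫ _x in (0:ℝ)..L, (ε/2)^2 := by
          apply intervalIntegral.integral_mono_on hL.le hf2 intervalIntegrable_const
          intro x _
          rw [← _root_.sq_abs]
          exact pow_le_pow_left₀ (_root_.abs_nonneg _) (hcon x) 2
      _ = (ε/2)^2 * L := by
          rw [intervalIntegral.integral_const, smul_eq_mul, sub_zero]; ring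
  -- bounds on the error terms
  have habs : ∀ (k d θ : ℝ), d ≠ 0 → 0 ≤ k → k ≤ 1 → |k * (Real.sin θ / d)| ≤ 1/|d| := by
    intro k d θ hd hk0 hk1
    rw [_root_.abs_mul, _root_.abs_div]
    have h1 : |Real.sin θ| ≤ 1 := _root_.abs_le.mpr ⟨Real.neg_one_le_sin θ, Real.sin_le_one θ⟩
    have h2 : |k| ≤ 1 := by rwa [_root_.abs_of_nonneg hk0]
    have hdp : 0 < |d| := _root_.abs_pos.mpr hd
    calc |k| * (|Real.sin θ| / |d|) ≤ 1 * (1 / |d|) := by gcongr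
      _ = 1/|d| := by ring
  have hc1 : 0 ≤ c1^2/2 ∧ c1^2/2 ≤ 1 := ⟨by positivity, by nlinarith⟩
  have hc2 : 0 ≤ c2^2/2 ∧ c2^2/2 ≤ 1 := ⟨by positivity, by nlinarith⟩
  have hcc : 0 ≤ c1*c2 ∧ c1*c2 ≤ 1 := ⟨by nlinarith, by nlinarith⟩
  have e1 := habs (c1^2/2) (2*a) (2*a*L) (by positivity) hc1.1 hc1.2
  have e2 := habs (c2^2/2) (2*b) (2*b*L) (by positivity) hc2.1 hc2.2
  have e3 := habs (c1*c2) (a-b) ((a-b)*L) habmb hcc.1 hcc.2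
  have e4 := habs (c1*c2) (a+b) ((a+b)*L) hapb hcc.1 hcc.2
  rw [_root_.abs_of_pos (by positivity : (0:ℝ) < 2*a)] at e1
  rw [_root_.abs_of_pos (by positivity : (0:ℝ) < 2*b)] at e2
  have e1' := _root_.abs_le.mp e1
  have e2' := _root_.abs_le.mp e2
  have e3' := _root_.abs_le.mp e3
  have e4' := _root_.abs_le.mp e4
  have hc1sq : ε^2 ≤ c1^2 := pow_le_pow_left₀ hε.le h1l 2
  have hc2sq : ε^2 ≤ c2^2 := pow_le_pow_left₀ hε.le h2l 2
  have hq1 : ε^2 * L ≤ c1^2 * L := mul_le_mul_of_nonneg_right hc1sq hL.le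
  have hq2 : ε^2 * L ≤ c2^2 * L := mul_le_mul_of_nonneg_right hc2sq hL.le
  linarith [hkey, hub, e1'.1, e1'.2, e2'.1, e2'.2, e3'.1, e3'.2, e4'.1, e4'.2,
    hq1, hq2, hC0', hLε, hC0nn]

lemma ouQ_mono (A σ : ℝ) (hA : A ≠ 0) {t s : ℝ} (h : t ≤ s) : ouQ A σ t ≤ ouQ A σ s := by
  unfold ouQ
  rcases hA.lt_or_gt with hA' | hA'
  · have h2A : 2*A < 0 := by linarith
    have he : Real.exp (2*A*s) ≤ Real.exp (2*A*t) := Real.exp_le_exp.mpr (by nlinarith)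
    have hnum : σ^2 * (Real.exp (2*A*s) - 1) ≤ σ^2 * (Real.exp (2*A*t) - 1) := by
      nlinarith [sq_nonneg σ]
    rw [div_eq_mul_inv, div_eq_mul_inv]
    exact mul_le_mul_of_nonpos_right hnum (inv_nonpos.mpr h2A.le)
  · have h2A : (0:ℝ) < 2*A := by linarith
    have he : Real.exp (2*A*t) ≤ Real.exp (2*A*s) := Real.exp_le_exp.mpr (by nlinarith)
    have hnum : σ^2 * (Real.exp (2*A*t) - 1) ≤ σ^2 * (Real.exp (2*A*s) - 1) := by
      nlinarith [sq_nonneg σ]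
    exact div_le_div_of_nonneg_right hnum h2A.le

theorem stmt11 (A σ : ℝ) (hA : A ≠ 0) :
    ∃ φ : ℝ → ℝ, Continuous φ ∧ (∃ M : ℝ, ∀ x, |φ x| ≤ M) ∧
      ∀ T : ℝ, 0 < T →
        ¬ ∃ F : ℕ → ℝ → ℝ → ℝ,
          (∀ n : ℕ, ((fun t => F n t) '' Icc (0 : ℝ) T).Finite) ∧
          (∀ n : ℕ, ∀ g : ℝ → ℝ, MeasurableSet {t : ℝ | t ∈ Icc (0 : ℝ) T ∧ F n t = g}) ∧
          (∀ᵐ t ∂(volume.restrict (Icc (0 : ℝ) T)),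
            Filter.Tendsto (fun n => ⨆ x : ℝ, (‖F n t x - ouR A σ t φ x‖₊ : ℝ≥0∞))
              Filter.atTop (nhds 0)) := by
  refine ⟨Real.sin, Real.continuous_sin,
    ⟨1, fun x => _root_.abs_le.mpr ⟨Real.neg_one_le_sin x, Real.sin_le_one x⟩⟩, ?_⟩
  intro T hT
  rintro ⟨F, hfin, hmeas, hae⟩
  -- the explicit form of the semigroup applied to sin
  have hR : ∀ t x : ℝ, ouR A σ t Real.sin x
      = Real.exp (-(((ouQ A σ t).toNNReal : ℝ))/2) * Real.sin (Real.exp (A*t) * x) :=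
    fun t x => integral_sin_gaussian _ _
  set cf : ℝ → ℝ := fun t => Real.exp (-(((ouQ A σ t).toNNReal : ℝ))/2) with hcf
  have hcmin : 0 < cf T := Real.exp_pos _
  have hcf_le_one : ∀ t : ℝ, cf t ≤ 1 := by
    intro t
    rw [hcf]
    calc Real.exp (-(((ouQ A σ t).toNNReal : ℝ))/2) ≤ Real.exp 0 := by
          apply Real.exp_le_exp.mpr
          have : (0:ℝ) ≤ ((ouQ A σ t).toNNReal : ℝ) := (ouQ A σ t).toNNReal.coe_nonneg
          linarith
      _ = 1 := Real.exp_zero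
  have hcf_lb : ∀ t ∈ Icc (0:ℝ) T, cf T ≤ cf t := by
    intro t ht
    apply Real.exp_le_exp.mpr
    have hq : ((ouQ A σ t).toNNReal : ℝ) ≤ ((ouQ A σ T).toNNReal : ℝ) := by
      exact_mod_cast Real.toNNReal_le_toNNReal (ouQ_mono A σ hA ht.2)
    linarith
  -- separation of the orbit
  have hsep : ∀ t ∈ Icc (0:ℝ) T, ∀ s ∈ Icc (0:ℝ) T, t ≠ s →
      ∃ x : ℝ, cf T / 2 < |ouR A σ t Real.sin x - ouR A σ s Real.sin x| := by
    intro t ht s hs hts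
    have hab : Real.exp (A*t) ≠ Real.exp (A*s) := by
      intro h
      exact hts (mul_left_cancel₀ hA (Real.exp_injective h))
    obtain ⟨x, hx⟩ := sep_lemma (Real.exp_pos (A*t)) (Real.exp_pos (A*s)) hab hcmin
      (hcf_lb t ht) (hcf_le_one t) (hcf_lb s hs) (hcf_le_one s)
    refine ⟨x, ?_⟩
    rw [hR, hR]
    convert hx using 3 <;> ring
  -- select approximations
  set d : ℝ := cf T / 8 with hd
  have hdpos : 0 < d := by rw [hd]; linarith
  set good : Set ℝ := {t | t ∈ Icc (0:ℝ) T ∧ Filter.Tendsto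
    (fun n => ⨆ x : ℝ, (‖F n t x - ouR A σ t Real.sin x‖₊ : ℝ≥0∞))
    Filter.atTop (nhds 0)} with hgood
  have hsel : ∀ t ∈ good, ∃ n : ℕ, ∀ x : ℝ, |F n t x - ouR A σ t Real.sin x| ≤ d := by
    intro t ht
    have h0 : (0:ℝ≥0∞) < ENNReal.ofReal d := ENNReal.ofReal_pos.mpr hdpos
    have hev : ∀ᶠ n in Filter.atTop,
        (⨆ x : ℝ, (‖F n t x - ouR A σ t Real.sin x‖₊ : ℝ≥0∞)) < ENNReal.ofReal d :=
      ht.2.eventually_lt_const h0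
    obtain ⟨n, hn⟩ := hev.exists
    refine ⟨n, fun x => ?_⟩
    have hx : (‖F n t x - ouR A σ t Real.sin x‖₊ : ℝ≥0∞) < ENNReal.ofReal d :=
      lt_of_le_of_lt (le_iSup (fun x : ℝ => (‖F n t x - ouR A σ t Real.sin x‖₊ : ℝ≥0∞)) x) hn
    rw [ENNReal.ofReal] at hx
    have hx2 : ‖F n t x - ouR A σ t Real.sin x‖₊ < d.toNNReal := ENNReal.coe_lt_coe.mp hx
    have hx3 : (‖F n t x - ouR A σ t Real.sin x‖₊ : ℝ) < d := by
      calc (‖F n t x - ouR A σ t Real.sin x‖₊ : ℝ) < (d.toNNReal : ℝ) := by exact_mod_cast hx2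
        _ = d := Real.coe_toNNReal _ hdpos.le
    rw [coe_nnnorm, Real.norm_eq_abs] at hx3
    exact hx3.le
  choose! nsel hnsel using hsel
  set ψ : ℝ → ℝ → ℝ := fun t => F (nsel t) t with hψ
  have hinj : InjOn ψ good := by
    intro t ht s hs hpsi
    by_contra hne
    obtain ⟨x, hx⟩ := hsep t ht.1 s hs.1 hne
    have h1 := hnsel t ht x
    have h2 := hnsel s hs x
    have hpx : ψ t x = ψ s x := by rw [hpsi]
    have htr : |ouR A σ t Real.sin x - ouR A σ s Real.sin x|
        ≤ |ψ t x - ouR A σ t Real.sin x| + |ψ s x - ouR A σ s Real.sin x| := by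
      rw [hpx]
      have := _root_.abs_sub_le (ouR A σ t Real.sin x) (ψ s x) (ouR A σ s Real.sin x)
      calc |ouR A σ t Real.sin x - ouR A σ s Real.sin x|
          ≤ |ouR A σ t Real.sin x - ψ s x| + |ψ s x - ouR A σ s Real.sin x| := this
        _ = |ψ s x - ouR A σ t Real.sin x| + |ψ s x - ouR A σ s Real.sin x| := by
            rw [_root_.abs_sub_comm]
    rw [hd] at hdpos
    have : cf T / 2 < cf T / 4 := by
      calc cf T / 2 < |ouR A σ t Real.sin x - ouR A σ s Real.sin x| := hx
        _ ≤ |ψ t x - ouR A σ t Real.sin x| + |ψ s x - ouR A σ s Real.sin x| := htr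
        _ ≤ d + d := add_le_add h1 h2
        _ = cf T / 4 := by rw [hd]; ring
    linarith
  have hGc : (⋃ n, (fun t => F n t) '' Icc (0:ℝ) T).Countable :=
    countable_iUnion fun n => (hfin n).countable
  have himg : ψ '' good ⊆ ⋃ n, (fun t => F n t) '' Icc (0:ℝ) T := by
    rintro _ ⟨t, ht, rfl⟩
    exact mem_iUnion.mpr ⟨nsel t, ⟨t, ht.1, rfl⟩⟩
  have hgood_c : good.Countable :=
    countable_of_injective_of_countable_image hinj (hGc.mono himg)
  have hgood0 : volume good = 0 := hgood_c.measure_zero _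
  have hbad0 : volume ({t : ℝ | ¬ Filter.Tendsto
      (fun n => ⨆ x : ℝ, (‖F n t x - ouR A σ t Real.sin x‖₊ : ℝ≥0∞))
      Filter.atTop (nhds 0)} ∩ Icc (0:ℝ) T) = 0 := by
    have := ae_iff.mp hae
    rwa [Measure.restrict_apply' measurableSet_Icc] at this
  have hsub : Icc (0:ℝ) T ⊆ ({t : ℝ | ¬ Filter.Tendsto
      (fun n => ⨆ x : ℝ, (‖F n t x - ouR A σ t Real.sin x‖₊ : ℝ≥0∞))
      Filter.atTop (nhds 0)} ∩ Icc (0:ℝ) T) ∪ good := by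
    intro t ht
    by_cases hp : Filter.Tendsto
      (fun n => ⨆ x : ℝ, (‖F n t x - ouR A σ t Real.sin x‖₊ : ℝ≥0∞)) Filter.atTop (nhds 0)
    · exact Or.inr ⟨ht, hp⟩
    · exact Or.inl ⟨hp, ht⟩
  have hIcc0 : volume (Icc (0:ℝ) T) = 0 := by
    refine le_antisymm ?_ zero_le
    calc volume (Icc (0:ℝ) T) ≤ volume (({t : ℝ | ¬ Filter.Tendsto
          (fun n => ⨆ x : ℝ, (‖F n t x - ouR A σ t Real.sin x‖₊ : ℝ≥0∞))
          Filter.atTop (nhds 0)} ∩ Icc (0:ℝ) T) ∪ good) := measure_mono hsub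
      _ ≤ _ + _ := measure_union_le _ _
      _ = 0 := by rw [hbad0, hgood0, add_zero]
  rw [Real.volume_Icc] at hIcc0
  have : (0:ℝ≥0∞) < ENNReal.ofReal (T - 0) := ENNReal.ofReal_pos.mpr (by linarith)
  exact this.ne' hIcc0
end

section
/- In the setting of the Ornstein–Uhlenbeck semigroup R_t with G-smoothing (H, Ξ, K separable Hilbert; (e^{tA})_{t≥0} strongly continuous with ‖e^{tA}‖ ≤ M e^{ωt}; σ ∈ L(Ξ,H) with e^{sA}σσ*e^{sA*} trace class for s > 0 and ∫_0^t Tr[e^{sA}σσ*e^{sA*}] ds < ∞; Q_t := ∫_0^t e^{sA}σσ*e^{sA*} ds; N_{Q_t} the centered Gaussian measure with covariance Q_t; G : D(G) ⊆ K → H closed densely defined with e^{tA}G extending to \overline{e^{tA}G} ∈ L(K,H) whose range lies in Q_t^{1/2}(H) for every t > 0; R_t[φ](x) := ∫_H φ(e^{tA}x + y) N_{Q_t}(dy)): for every m ≥ 0, if φ ∈ C¹_m(H) (φ ∈ C_m(H), Fréchet differentiable with Dφ ∈ C_m(H,H)), then for every t > 0, x ∈ H, and k ∈ K, ⟨D^G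 R_t[φ](x), k⟩_K = ∫_H ⟨Dφ(y + e^{tA}x), \overline{e^{tA}G}\,k⟩_H N_{Q_t}(dy). -/
open Filter MeasureTheory Set
open ProbabilityTheory
open scoped Topology
open scoped RealInnerProductSpace ENNReal NNReal

noncomputable section

variable {H Ξ : Type*}
  [NormedAddCommGroup H] [InnerProductSpace ℝ H] [CompleteSpace H]
  [NormedAddCommGroup Ξ] [InnerProductSpace ℝ Ξ] [CompleteSpace Ξ]

/-- `opS T σ s = e^{sA} σ σ* e^{sA*} = (e^{sA}σ)(e^{sA}σ)*`. -/
def opS (T : ℝ → H →L[ℝ] H) (σ : Ξ →L[ℝ] H) (s : ℝ) : H →L[ℝ] H :=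
  ((T s).comp σ).comp (ContinuousLinearMap.adjoint ((T s).comp σ))

/-- The trace (in `[0,∞]`) of an operator w.r.t. the orthonormal basis `b`:
`Tr[S] = Σ_k ⟨S e_k, e_k⟩`. -/
def trB (b : HilbertBasis ℕ ℝ H) (S : H →L[ℝ] H) : ℝ≥0∞ :=
  ∑' i, ENNReal.ofReal ⟪S (b i), b i⟫

/-- `Q_t x = ∫_0^t e^{sA} σ σ* e^{sA*} x ds` (pointwise Bochner integral). -/
def QtFun (T : ℝ → H →L[ℝ] H) (σ : Ξ →L[ℝ] H) (t : ℝ) (x : H) : H :=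
  ∫ s in Ioc (0 : ℝ) t, opS T σ s x

/-- `Tr[Q_t]` w.r.t. the orthonormal basis `b`, in `[0,∞]`. -/
def trQ (b : HilbertBasis ℕ ℝ H) (T : ℝ → H →L[ℝ] H) (σ : Ξ →L[ℝ] H) (t : ℝ) : ℝ≥0∞ :=
  ∑' i, ENNReal.ofReal ⟪QtFun T σ t (b i), b i⟫


/-- `φ ∈ B_m(H)`. -/
def MemBm {H : Type*} [NormedAddCommGroup H] [MeasurableSpace H]
    (m : ℝ) (φ : H → ℝ) : Prop :=
  Measurable φ ∧ ∃ C : ℝ, ∀ x : H, |φ x| ≤ C * (1 + ‖x‖ ^ m)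

/-- the `B_m`-norm `|φ|_{B_m} = sup_x |φ(x)|/(1+‖x‖^m)`. -/
noncomputable def bmNorm {H : Type*} [NormedAddCommGroup H] (m : ℝ) (φ : H → ℝ) : ℝ :=
  ⨆ x : H, |φ x| / (1 + ‖x‖ ^ m)

/-- `f : H → ℝ` is `G`-Fréchet differentiable at `x` with `G`-gradient `p ∈ K`
(identified via Riesz), for a fixed closed densely defined operator
`G : D(G) ⊆ K → H` given by `Gop` on the domain `domG`: the directional difference
quotients along `G k`, `k ∈ D(G)`, converge to `⟪p, k⟫`, uniformly for `k` in the unit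
ball of `K` intersected with `D(G)`. -/
def HasGFrechetGradientAt {K H : Type*}
    [NormedAddCommGroup K] [InnerProductSpace ℝ K]
    [NormedAddCommGroup H] [InnerProductSpace ℝ H]
    (domG : Submodule ℝ K) (Gop : domG →ₗ[ℝ] H)
    (f : H → ℝ) (p : K) (x : H) : Prop :=
  (∀ k : domG, Tendsto (fun s : ℝ => s⁻¹ * (f (x + s • Gop k) - f x))
    (nhdsWithin (0 : ℝ) {0}ᶜ) (nhds ⟪p, (k : K)⟫)) ∧
  ∀ ε : ℝ, 0 < ε → ∃ δ : ℝ, 0 < δ ∧ ∀ s : ℝ, s ≠ 0 → |s| < δ →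
    ∀ k : domG, ‖(k : K)‖ ≤ 1 →
      |s⁻¹ * (f (x + s • Gop k) - f x) - ⟪p, (k : K)⟫| ≤ ε


/-- superadditivity of lintegral over countable sums, no measurability needed -/
lemma my_tsum_lintegral_le {α : Type*} [MeasurableSpace α] (μ : Measure α) (f : ℕ → α → ℝ≥0∞) :
    ∑' i, ∫⁻ a, f i a ∂μ ≤ ∫⁻ a, ∑' i, f i a ∂μ := by
  rw [ENNReal.tsum_eq_iSup_sum]
  refine iSup_le fun s => ?_
  have h1 : ∑ i ∈ s, ∫⁻ a, f i a ∂μ ≤ ∫⁻ a, ∑ i ∈ s, f i a ∂μ := by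
    classical
    induction s using Finset.induction with
    | empty => simp
    | @insert j s hj ih =>
      rw [Finset.sum_insert hj]
      refine le_trans (add_le_add_right ih _) ?_
      refine le_trans (MeasureTheory.le_lintegral_add _ _) ?_
      refine lintegral_mono fun a => ?_
      rw [Finset.sum_insert hj]
  refine h1.trans (lintegral_mono fun a => ENNReal.sum_le_tsum s)

/-- finiteness of even moments of the standard gaussian -/
lemma my_gaussian_moment_std (n : ℕ) :
    ∫⁻ x, ENNReal.ofReal (x ^ (2*n)) ∂(gaussianReal 0 1) < ⊤ := by
  rw [gaussianReal_of_var_ne_zero 0 one_ne_zero]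
  rw [lintegral_withDensity_eq_lintegral_mul _ (measurable_gaussianPDF 0 1)
    (by fun_prop)]
  have hint : Integrable (fun x : ℝ => gaussianPDFReal 0 1 x * x ^ (2*n)) := by
    have h := integrable_rpow_mul_exp_neg_mul_sq (b := (2:ℝ)⁻¹) (by norm_num)
      (s := (2*n : ℝ)) (lt_of_lt_of_le neg_one_lt_zero (by positivity))
    rw [gaussianPDFReal_def]
    simp only [NNReal.coe_one, mul_one, sub_zero]
    have h2 := h.const_mul (Real.sqrt (2 * Real.pi))⁻¹
    refine h2.congr ?_
    refine ae_of_all _ fun x => ?_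
    have h1 : x ^ (2 * (n:ℝ)) = x ^ (2*n) := by
      rw [show (2 * (n:ℝ)) = ((2*n : ℕ) : ℝ) by push_cast; ring, Real.rpow_natCast]
    simp only [h1]
    ring_nf
  calc ∫⁻ x, gaussianPDF 0 1 x * ENNReal.ofReal (x ^ (2*n))
      = ∫⁻ x, ENNReal.ofReal (gaussianPDFReal 0 1 x * x ^ (2*n)) := by
        refine lintegral_congr fun x => ?_
        rw [gaussianPDF, ENNReal.ofReal_mul (gaussianPDFReal_nonneg 0 1 x)]
    _ ≤ ∫⁻ x, ‖gaussianPDFReal 0 1 x * x ^ (2*n)‖₊ := by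
        refine lintegral_mono fun x => ?_
        exact Real.ofReal_le_enorm _
    _ < ⊤ := hint.2

lemma my_gaussian_moment_scaled (n : ℕ) (hn : 1 ≤ n) (v : ℝ≥0) :
    ∫⁻ x, ENNReal.ofReal (x ^ (2*n)) ∂(gaussianReal 0 v)
      = (∫⁻ x, ENNReal.ofReal (x ^ (2*n)) ∂(gaussianReal 0 1)) * (v : ℝ≥0∞) ^ n := by
  by_cases hv : v = 0
  · subst hv
    rw [gaussianReal_zero_var, lintegral_dirac]
    have h2n : 2*n ≠ 0 := by omega
    have hn0 : n ≠ 0 := by omega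
    rw [zero_pow h2n]
    simp [zero_pow hn0]
  · have hmap : (gaussianReal 0 1).map (fun x => Real.sqrt v * x) = gaussianReal 0 v := by
      have := gaussianReal_map_const_mul (μ := 0) (v := 1) (Real.sqrt v)
      rw [mul_zero] at this
      convert this using 2
      ext
      simp [Real.sq_sqrt v.2]
    rw [← hmap, lintegral_map (by fun_prop) (by fun_prop)]
    have : ∀ x : ℝ, ENNReal.ofReal ((Real.sqrt v * x) ^ (2*n))
        = ENNReal.ofReal ((v : ℝ) ^ n) * ENNReal.ofReal (x ^ (2*n)) := by
      intro x
      rw [mul_pow, ← ENNReal.ofReal_mul (by positivity)]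
      congr 1
      congr 1
      rw [pow_mul]
      congr 1
      exact Real.sq_sqrt v.2
    simp_rw [this]
    rw [lintegral_const_mul _ (by fun_prop)]
    rw [mul_comm]
    congr 1
    have hc : ((v:ℝ)^n) = ((v^n : ℝ≥0) : ℝ) := by push_cast; ring
    rw [hc, ENNReal.ofReal_coe_nnreal, ENNReal.coe_pow]

/-- Minkowski for finite sums in lintegral form. -/
lemma my_lintegral_sum_pow_le {α ι : Type*} [MeasurableSpace α] (μ : Measure α)
    (s : Finset ι) (f : ι → α → ℝ≥0∞) (hf : ∀ i, Measurable (f i)) (p : ℝ) (hp : 1 ≤ p) :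
    ∫⁻ x, (∑ i ∈ s, f i x) ^ p ∂μ ≤ (∑ i ∈ s, (∫⁻ x, (f i x) ^ p ∂μ) ^ (1/p)) ^ p := by
  classical
  have hp0 : 0 < p := lt_of_lt_of_le one_pos hp
  induction s using Finset.induction with
  | empty =>
    simp [ENNReal.zero_rpow_of_pos hp0]
  | @insert j s hj ih =>
    simp only [Finset.sum_insert hj]
    have h1 := ENNReal.lintegral_Lp_add_le (μ := μ) (p := p)
      ((hf j).aemeasurable) (Finset.aemeasurable_fun_sum s fun i _ => (hf i).aemeasurable) hp
    have h2 : ∫⁻ x, (f j x + ∑ i ∈ s, f i x) ^ p ∂μ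
        = ((∫⁻ a, ((f j + fun x => ∑ i ∈ s, f i x) a) ^ p ∂μ) ^ (1/p)) ^ p := by
      rw [← ENNReal.rpow_mul, one_div_mul_cancel hp0.ne', ENNReal.rpow_one]
      rfl
    rw [h2]
    refine (ENNReal.rpow_le_rpow h1 hp0.le).trans ?_
    refine ENNReal.rpow_le_rpow ?_ hp0.le
    refine add_le_add_right ?_ _
    calc (∫⁻ x, (∑ i ∈ s, f i x) ^ p ∂μ) ^ (1/p)
        ≤ (((∑ i ∈ s, (∫⁻ x, (f i x) ^ p ∂μ) ^ (1/p)) ^ p)) ^ (1/p) :=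
          ENNReal.rpow_le_rpow ih (by positivity)
      _ = ∑ i ∈ s, (∫⁻ x, (f i x) ^ p ∂μ) ^ (1/p) := by
          rw [← ENNReal.rpow_mul, mul_one_div, div_self hp0.ne', ENNReal.rpow_one]

lemma my_iSup_pow (u : ℕ → ℝ≥0∞) (hu : Monotone u) (n : ℕ) :
    (⨆ j, u j) ^ n = ⨆ j, (u j) ^ n := by
  have hmono : Monotone fun j => (u j) ^ n := fun i j hij => pow_le_pow_left' (hu hij) n
  have h1 : Tendsto (fun j => (u j) ^ n) atTop (𝓝 ((⨆ j, u j) ^ n)) :=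
    ENNReal.Tendsto.pow (tendsto_atTop_iSup hu)
  exact tendsto_nhds_unique h1 (tendsto_atTop_iSup hmono)

/-- Moment bound for measures with gaussian marginals. -/
lemma my_moment_bound {X : Type*} [NormedAddCommGroup X] [InnerProductSpace ℝ X]
    [MeasurableSpace X] [BorelSpace X]
    (μ : Measure X) (b : HilbertBasis ℕ ℝ X) (w : ℕ → ℝ≥0)
    (hmap : ∀ i, μ.map (fun y => ⟪y, b i⟫) = gaussianReal 0 (w i))
    (n : ℕ) (hn : 1 ≤ n) :
    ∫⁻ y, ENNReal.ofReal (‖y‖ ^ (2*n)) ∂μ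
      ≤ (∫⁻ x, ENNReal.ofReal (x ^ (2*n)) ∂(gaussianReal 0 1)) * (∑' i, ((w i : ℝ≥0∞))) ^ n := by
  set Cg := ∫⁻ x, ENNReal.ofReal (x ^ (2*n)) ∂(gaussianReal 0 1) with hCg
  set a : ℕ → X → ℝ≥0∞ := fun i y => ENNReal.ofReal (⟪y, b i⟫ ^ 2) with ha
  have hinner_cont : ∀ i, Continuous fun y : X => ⟪y, b i⟫ :=
    fun i => continuous_id.inner continuous_const
  have ha_meas : ∀ i, Measurable (a i) := fun i =>
    (((hinner_cont i).pow 2).measurable).ennreal_ofReal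
  have hn0 : (n : ℝ) ≠ 0 := by positivity
  -- Parseval
  have hParseval : ∀ y : X, ENNReal.ofReal (‖y‖ ^ (2*n)) = (∑' i, a i y) ^ n := by
    intro y
    have h0 := b.tsum_inner_mul_inner y y
    have hc : ∀ i, ⟪y, b i⟫ * ⟪b i, y⟫ = ⟪y, b i⟫ ^ 2 := by
      intro i; rw [real_inner_comm (b i) y, sq]
    simp_rw [hc] at h0
    rw [real_inner_self_eq_norm_sq] at h0
    have hsummable : Summable fun i => ⟪y, b i⟫ ^ 2 := by
      have := b.summable_inner_mul_inner y y
      simpa [hc] using this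
    rw [pow_mul, ENNReal.ofReal_pow (by positivity), ← h0,
      ENNReal.ofReal_tsum_of_nonneg (fun i => sq_nonneg _) hsummable]
  -- the i-th moment
  have hMi : ∀ i, ∫⁻ y, (a i y) ^ (n : ℝ) ∂μ ≤ Cg * ((w i : ℝ≥0∞)) ^ n := by
    intro i
    have h1 : ∀ y : X, (a i y) ^ (n : ℝ) = ENNReal.ofReal (⟪y, b i⟫ ^ (2*n)) := by
      intro y
      rw [ha]
      rw [ENNReal.rpow_natCast, ← ENNReal.ofReal_pow (sq_nonneg _), ← pow_mul]
    simp_rw [h1]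
    have h2 : ∫⁻ y, ENNReal.ofReal (⟪y, b i⟫ ^ (2*n)) ∂μ
        = ∫⁻ x, ENNReal.ofReal (x ^ (2*n)) ∂(gaussianReal 0 (w i)) := by
      rw [← hmap i, lintegral_map (by fun_prop) (hinner_cont i).measurable]
    rw [h2, my_gaussian_moment_scaled n hn (w i)]
  -- partial sums
  have hmono : Monotone fun J : ℕ => fun y => ∑ i ∈ Finset.range J, a i y := by
    intro J J' hJ y
    exact Finset.sum_le_sum_of_subset (Finset.range_subset_range.mpr hJ)
  have hts : ∀ y : X, (∑' i, a i y) ^ n = ⨆ J : ℕ, (∑ i ∈ Finset.range J, a i y) ^ n := by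
    intro y
    rw [ENNReal.tsum_eq_iSup_nat]
    exact my_iSup_pow _ (fun J J' hJ => hmono hJ y) n
  calc ∫⁻ y, ENNReal.ofReal (‖y‖ ^ (2*n)) ∂μ
      = ∫⁻ y, ⨆ J : ℕ, (∑ i ∈ Finset.range J, a i y) ^ n ∂μ := by
        refine lintegral_congr fun y => ?_
        rw [hParseval y, hts y]
    _ = ⨆ J : ℕ, ∫⁻ y, (∑ i ∈ Finset.range J, a i y) ^ n ∂μ := by
        refine lintegral_iSup (fun J => ?_) ?_
        · exact (Finset.measurable_sum _ fun i _ => ha_meas i).pow_const n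
        · intro J J' hJ y
          exact pow_le_pow_left' (hmono hJ y) n
    _ ≤ Cg * (∑' i, ((w i : ℝ≥0∞))) ^ n := by
        refine iSup_le fun J => ?_
        have hnat : ∀ (x : ℝ≥0∞), x ^ n = x ^ (n : ℝ) := fun x => (ENNReal.rpow_natCast x n).symm
        have h3 : ∫⁻ y, (∑ i ∈ Finset.range J, a i y) ^ (n:ℝ) ∂μ
            ≤ (∑ i ∈ Finset.range J, (∫⁻ y, (a i y) ^ (n:ℝ) ∂μ) ^ (1/(n:ℝ))) ^ (n:ℝ) :=
          my_lintegral_sum_pow_le μ _ a ha_meas (n:ℝ) (by exact_mod_cast hn)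
        have h4 : ∀ i, (∫⁻ y, (a i y) ^ (n:ℝ) ∂μ) ^ (1/(n:ℝ))
            ≤ Cg ^ (1/(n:ℝ)) * (w i : ℝ≥0∞) := by
          intro i
          calc (∫⁻ y, (a i y) ^ (n:ℝ) ∂μ) ^ (1/(n:ℝ))
              ≤ (Cg * ((w i : ℝ≥0∞)) ^ n) ^ (1/(n:ℝ)) :=
                ENNReal.rpow_le_rpow (hMi i) (by positivity)
            _ = Cg ^ (1/(n:ℝ)) * (w i : ℝ≥0∞) := by
                rw [ENNReal.mul_rpow_of_nonneg _ _ (by positivity)]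
                congr 1
                rw [← ENNReal.rpow_natCast ((w i : ℝ≥0∞)) n, ← ENNReal.rpow_mul]
                rw [mul_one_div, div_self hn0, ENNReal.rpow_one]
        have h5 : ∫⁻ y, (∑ i ∈ Finset.range J, a i y) ^ n ∂μ
            = ∫⁻ y, (∑ i ∈ Finset.range J, a i y) ^ (n:ℝ) ∂μ := by
          simp_rw [hnat]
        rw [h5]
        refine h3.trans ?_
        have h6 : (∑ i ∈ Finset.range J, (∫⁻ y, (a i y) ^ (n:ℝ) ∂μ) ^ (1/(n:ℝ)))
            ≤ Cg ^ (1/(n:ℝ)) * ∑' i, (w i : ℝ≥0∞) := by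
          calc (∑ i ∈ Finset.range J, (∫⁻ y, (a i y) ^ (n:ℝ) ∂μ) ^ (1/(n:ℝ)))
              ≤ ∑ i ∈ Finset.range J, Cg ^ (1/(n:ℝ)) * (w i : ℝ≥0∞) :=
                Finset.sum_le_sum fun i _ => h4 i
            _ = Cg ^ (1/(n:ℝ)) * ∑ i ∈ Finset.range J, (w i : ℝ≥0∞) := by
                rw [Finset.mul_sum]
            _ ≤ _ := mul_le_mul_right (ENNReal.sum_le_tsum _) _
        calc (∑ i ∈ Finset.range J, (∫⁻ y, (a i y) ^ (n:ℝ) ∂μ) ^ (1/(n:ℝ))) ^ (n:ℝ)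
            ≤ (Cg ^ (1/(n:ℝ)) * ∑' i, (w i : ℝ≥0∞)) ^ (n:ℝ) :=
              ENNReal.rpow_le_rpow h6 (by positivity)
          _ = Cg * (∑' i, (w i : ℝ≥0∞)) ^ n := by
              rw [ENNReal.mul_rpow_of_nonneg _ _ (by positivity), ← ENNReal.rpow_mul,
                one_div_mul_cancel hn0, ENNReal.rpow_one, ENNReal.rpow_natCast]

lemma my_integrable_one_add_norm {X : Type*} [NormedAddCommGroup X]
    [MeasurableSpace X] [OpensMeasurableSpace X]
    (μ : Measure X) [IsProbabilityMeasure μ]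
    (hmom : ∀ n : ℕ, 1 ≤ n → ∫⁻ y, ENNReal.ofReal (‖y‖ ^ (2*n)) ∂μ < ⊤)
    (m : ℝ) (hm : 0 ≤ m) :
    Integrable (fun y => (1 + ‖y‖) ^ m) μ := by
  set n : ℕ := ⌈m⌉₊ + 1 with hn
  have hn1 : 1 ≤ n := Nat.le_add_left 1 _
  have hm2n : m ≤ (2*n : ℕ) := by
    have h1 : m ≤ (⌈m⌉₊ : ℝ) := Nat.le_ceil m
    have h2 : ((⌈m⌉₊ : ℕ) : ℝ) ≤ ((2*n : ℕ) : ℝ) := by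
      rw [hn]; push_cast; linarith [Nat.cast_nonneg (α := ℝ) ⌈m⌉₊]
    linarith
  have hint2n : Integrable (fun y : X => ‖y‖ ^ (2*n)) μ := by
    refine ⟨(continuous_norm.pow (2*n)).aestronglyMeasurable, ?_⟩
    rw [HasFiniteIntegral]
    have : ∀ y : X, ‖‖y‖ ^ (2*n)‖ₑ = ENNReal.ofReal (‖y‖ ^ (2*n)) := by
      intro y
      rw [Real.enorm_eq_ofReal (by positivity)]
    simp_rw [this]
    exact hmom n hn1
  have hintg : Integrable (fun y : X => (2:ℝ) ^ m * (1 + ‖y‖ ^ (2*n))) μ :=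
    (((integrable_const (1:ℝ)).add hint2n).const_mul _)
  refine hintg.mono' ?_ (ae_of_all _ fun y => ?_)
  · exact ((continuous_const.add continuous_norm).rpow_const
      (fun y => Or.inr hm)).aestronglyMeasurable
  · rw [Real.norm_of_nonneg (Real.rpow_nonneg (by positivity) m)]
    have h1 : (1 + ‖y‖ : ℝ) ≤ 2 * max 1 ‖y‖ := by
      have := le_max_left (1:ℝ) ‖y‖
      have := le_max_right (1:ℝ) ‖y‖
      linarith
    have h2 : (1 + ‖y‖ : ℝ) ^ m ≤ (2 * max 1 ‖y‖) ^ m :=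
      Real.rpow_le_rpow (by positivity) h1 hm
    have h3 : (2 * max 1 ‖y‖ : ℝ) ^ m = 2 ^ m * (max 1 ‖y‖) ^ m :=
      Real.mul_rpow (by norm_num) (le_trans zero_le_one (le_max_left _ _))
    have h4 : (max 1 ‖y‖ : ℝ) ^ m ≤ 1 + ‖y‖ ^ (2*n) := by
      rcases le_total ‖y‖ 1 with h | h
      · rw [max_eq_left h, Real.one_rpow]
        have : (0:ℝ) ≤ ‖y‖ ^ (2*n) := by positivity
        linarith
      · rw [max_eq_right h]
        have h5 : ‖y‖ ^ m ≤ ‖y‖ ^ ((2*n : ℕ) : ℝ) :=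
          Real.rpow_le_rpow_of_exponent_le h hm2n
        rw [Real.rpow_natCast] at h5
        linarith
    have h6 : (0:ℝ) ≤ (2:ℝ) ^ m := by positivity
    calc (1 + ‖y‖ : ℝ) ^ m ≤ 2 ^ m * (max 1 ‖y‖) ^ m := by rw [← h3]; exact h2
      _ ≤ 2 ^ m * (1 + ‖y‖ ^ (2*n)) := by
          exact mul_le_mul_of_nonneg_left h4 h6

lemma my_integrable_growth {X E : Type*} [NormedAddCommGroup X]
    [MeasurableSpace X] [OpensMeasurableSpace X] [SecondCountableTopology X] [NormedAddCommGroup E]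
    (μ : Measure X) {m : ℝ}
    (h1 : Integrable (fun y : X => (1 + ‖y‖) ^ m) μ)
    (v : X → E) (hv : Continuous v) (C : ℝ)
    (hb : ∀ y, ‖v y‖ ≤ C * (1 + ‖y‖) ^ m) : Integrable v μ :=
  (h1.const_mul C).mono' hv.aestronglyMeasurable (ae_of_all _ hb)

lemma my_growth_shift {X E : Type*} [NormedAddCommGroup X] [NormedAddCommGroup E]
    {m C R : ℝ} (hm : 0 ≤ m) (hR : 0 ≤ R)
    (v : X → E) (hv : ∀ x, ‖v x‖ ≤ C * (1 + ‖x‖ ^ m))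
    (w y : X) (hw : ‖w‖ ≤ R) :
    ‖v (w + y)‖ ≤ (C * (1 + (R+1) ^ m)) * (1 + ‖y‖) ^ m := by
  have hC : 0 ≤ C := by
    have h0 := (norm_nonneg (v 0)).trans (hv 0)
    have h1 : (0:ℝ) ≤ ‖(0:X)‖ ^ m := Real.rpow_nonneg (norm_nonneg _) m
    nlinarith
  have hb1 : ‖w + y‖ ≤ (R+1) * (1 + ‖y‖) := by
    have h2 := norm_add_le w y
    have h3 := norm_nonneg y
    nlinarith
  have hb2 : ‖w + y‖ ^ m ≤ (R+1) ^ m * (1 + ‖y‖) ^ m := by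
    rw [← Real.mul_rpow (by linarith) (by positivity)]
    exact Real.rpow_le_rpow (norm_nonneg _) hb1 hm
  have hb3 : (1:ℝ) ≤ (1 + ‖y‖) ^ m := by
    have := Real.rpow_le_rpow (zero_le_one) (by linarith [norm_nonneg y] : (1:ℝ) ≤ 1 + ‖y‖) hm
    rwa [Real.one_rpow] at this
  have hb4 : (0:ℝ) ≤ (R+1) ^ m := Real.rpow_nonneg (by linarith) m
  calc ‖v (w + y)‖ ≤ C * (1 + ‖w + y‖ ^ m) := hv _
    _ ≤ C * ((1 + (R+1) ^ m) * (1 + ‖y‖) ^ m) := by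
        refine mul_le_mul_of_nonneg_left ?_ hC
        nlinarith
    _ = (C * (1 + (R+1) ^ m)) * (1 + ‖y‖) ^ m := by ring

/-- upper bound: values inside the open ball are dominated by the countable sup. -/
lemma my_ball_sup_ge {X E : Type*} [NormedAddCommGroup X] [NormedAddCommGroup E]
    (g : X → E) (hg : Continuous g) (d : ℕ → X) (hd : DenseRange d)
    (z h : X) (ρ : ℝ) (hh : ‖h‖ < ρ) :
    (‖g (z + h) - g z‖₊ : ℝ≥0∞)
      ≤ ⨆ j, (if ‖d j‖ < ρ then (‖g (z + d j) - g z‖₊ : ℝ≥0∞) else 0) := by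
  have hmem : h ∈ Metric.ball (0 : X) ρ := by
    simpa [Metric.mem_ball, dist_zero_right] using hh
  have hsub : Metric.ball (0 : X) ρ ⊆ closure (Metric.ball (0 : X) ρ ∩ Set.range d) :=
    hd.open_subset_closure_inter Metric.isOpen_ball
  have hcl := hsub hmem
  rw [mem_closure_iff_seq_limit] at hcl
  obtain ⟨x, hx, hlim⟩ := hcl
  have hj : ∀ l, ∃ j, d j = x l := fun l => (hx l).2
  choose j hjx using hj
  have hxb : ∀ l, ‖x l‖ < ρ := by
    intro l
    have := (hx l).1
    simpa [Metric.mem_ball, dist_zero_right] using this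
  have htendsto : Tendsto (fun l => (‖g (z + x l) - g z‖₊ : ℝ≥0∞)) atTop
      (𝓝 (‖g (z + h) - g z‖₊ : ℝ≥0∞)) := by
    refine (ENNReal.tendsto_coe.mpr ?_)
    refine Tendsto.nnnorm ?_
    refine Tendsto.sub ?_ tendsto_const_nhds
    exact (hg.tendsto _).comp (tendsto_const_nhds.add hlim)
  refine le_of_tendsto htendsto ?_
  refine Filter.Eventually.of_forall fun l => ?_
  calc (‖g (z + x l) - g z‖₊ : ℝ≥0∞)
      = (if ‖d (j l)‖ < ρ then (‖g (z + d (j l)) - g z‖₊ : ℝ≥0∞) else 0) := by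
        rw [hjx l, if_pos (hxb l)]
    _ ≤ _ := le_iSup (fun j => (if ‖d j‖ < ρ then (‖g (z + d j) - g z‖₊ : ℝ≥0∞) else 0)) (j l)

/-- the countable sup over a ball of radius `ρ ≤ r` is bounded whenever the increments over
the ball of radius `r` are. -/
lemma my_ball_sup_le {X E : Type*} [NormedAddCommGroup X] [NormedAddCommGroup E]
    (g : X → E) (d : ℕ → X) (B ρ r : ℝ) (z : X) (hρ : ρ ≤ r)
    (hB : ∀ h : X, ‖h‖ ≤ r → ‖g (z + h) - g z‖ ≤ B) :
    (⨆ j, (if ‖d j‖ < ρ then (‖g (z + d j) - g z‖₊ : ℝ≥0∞) else 0)) ≤ ENNReal.ofReal B := by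
  refine iSup_le fun j => ?_
  split_ifs with hdj
  · rw [← enorm_eq_nnnorm, ← ofReal_norm]
    exact ENNReal.ofReal_le_ofReal (hB _ (le_trans hdj.le hρ))
  · exact zero_le

/-- the countable sup over balls of radii `1/(nn+1)` tends to 0. -/
lemma my_ball_sup_tendsto {X E : Type*} [NormedAddCommGroup X] [NormedAddCommGroup E]
    (g : X → E) (hg : Continuous g) (d : ℕ → X) (z : X) :
    Tendsto (fun nn : ℕ =>
        ⨆ j, (if ‖d j‖ < 1/(nn+1 : ℝ) then (‖g (z + d j) - g z‖₊ : ℝ≥0∞) else 0))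
      atTop (𝓝 0) := by
  rw [ENNReal.tendsto_atTop_zero]
  intro ε hε
  -- find a positive real e with ofReal e ≤ ε
  obtain ⟨e, he, hee⟩ : ∃ e : ℝ, 0 < e ∧ ENNReal.ofReal e ≤ ε := by
    rcases eq_or_ne ε ⊤ with h | h
    · exact ⟨1, one_pos, by simp [h]⟩
    · refine ⟨ε.toReal, ?_, ?_⟩
      · exact ENNReal.toReal_pos hε.ne' h
      · rw [ENNReal.ofReal_toReal h]
  -- continuity of g at z
  have hc : ContinuousAt (fun h : X => g (z + h)) 0 :=
    (hg.comp (continuous_const.add continuous_id)).continuousAt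
  rw [Metric.continuousAt_iff] at hc
  obtain ⟨δ, hδ, hδ'⟩ := hc e he
  obtain ⟨Nn, hNn⟩ : ∃ Nn : ℕ, 1/(Nn+1 : ℝ) ≤ δ := by
    obtain ⟨Nn, hNn⟩ := exists_nat_gt (1/δ)
    refine ⟨Nn, ?_⟩
    rw [div_le_iff₀ (by positivity)]
    rw [div_lt_iff₀ hδ] at hNn
    nlinarith [hδ]
  refine ⟨Nn, fun nn hnn => ?_⟩
  refine le_trans (iSup_le fun j => ?_) hee
  split_ifs with hdj
  · have h1 : 1/(nn+1 : ℝ) ≤ 1/(Nn+1 : ℝ) := by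
      apply one_div_le_one_div_of_le (by positivity)
      have : (Nn : ℝ) ≤ nn := by exact_mod_cast hnn
      linarith
    have h2 : dist (d j) (0 : X) < δ := by
      rw [dist_zero_right]
      exact lt_of_lt_of_le hdj (le_trans h1 hNn)
    have h3 := hδ' h2
    rw [← enorm_eq_nnnorm, ← ofReal_norm]
    refine ENNReal.ofReal_le_ofReal ?_
    have : dist (g (z + d j)) (g (z + 0)) < e := by simpa using h3
    rw [add_zero] at this
    rw [← dist_eq_norm]
    exact this.le
  · exact zero_le

/-- packaged modulus-of-continuity machinery. -/
lemma my_F_exists {X E : Type*} [NormedAddCommGroup X] [NormedAddCommGroup E]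
    [TopologicalSpace.SeparableSpace X] [SecondCountableTopology X] [Nonempty X]
    [MeasurableSpace X] [OpensMeasurableSpace X]
    (g : X → E) (hg : Continuous g) (z0 : X) :
    ∃ F : ℕ → X → ℝ≥0∞,
      (∀ nn, Measurable (F nn)) ∧
      (∀ (nn : ℕ) (y h : X), ‖h‖ < 1/(nn+1:ℝ) →
        (‖g ((z0 + y) + h) - g (z0 + y)‖₊ : ℝ≥0∞) ≤ F nn y) ∧
      (∀ (nn : ℕ) (y : X) (B : ℝ),
        (∀ h : X, ‖h‖ ≤ 1 → ‖g ((z0 + y) + h) - g (z0 + y)‖ ≤ B) →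
        F nn y ≤ ENNReal.ofReal B) ∧
      (∀ y : X, Tendsto (fun nn => F nn y) atTop (𝓝 0)) := by
  have hdr : DenseRange (TopologicalSpace.denseSeq X) := TopologicalSpace.denseRange_denseSeq X
  refine ⟨fun nn y => ⨆ j, (if ‖TopologicalSpace.denseSeq X j‖ < 1/(nn+1:ℝ) then
      (‖g ((z0 + y) + TopologicalSpace.denseSeq X j) - g (z0 + y)‖₊ : ℝ≥0∞) else 0),
    ?_, ?_, ?_, ?_⟩
  · intro nn
    refine Measurable.iSup fun j => ?_
    split_ifs with h
    · exact ((hg.comp ((continuous_const.add continuous_id).add continuous_const)).sub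
        (hg.comp (continuous_const.add continuous_id))).nnnorm.measurable.coe_nnreal_ennreal
    · exact measurable_const
  · intro nn y h hh
    exact my_ball_sup_ge g hg _ hdr (z0 + y) h (1/(nn+1:ℝ)) hh
  · intro nn y B hB
    refine my_ball_sup_le g _ B (1/(nn+1:ℝ)) 1 (z0 + y) ?_ hB
    rw [div_le_one (by positivity)]
    linarith [Nat.cast_nonneg (α := ℝ) nn]
  · intro y
    exact my_ball_sup_tendsto g hg _ (z0 + y)

set_option maxHeartbeats 1600000 in
/-- in the Ornstein–Uhlenbeck setting with `G`-smoothing, if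
`φ ∈ C¹_m(H)` (i.e. `φ` is continuous with growth of order `m`, Fréchet differentiable
with gradient `gφ : H → H` continuous and of growth of order `m`), then for every
`t > 0`, `x ∈ H` and `k ∈ K`,
`⟨D^G R_t[φ](x), k⟩_K = ∫_H ⟨Dφ(y + e^{tA}x), (e^{tA}G)k⟩_H dN_{Q_t}(y)`. -/
theorem stmt16 {H Ξ K : Type*}
    [NormedAddCommGroup H] [InnerProductSpace ℝ H] [CompleteSpace H]
    [TopologicalSpace.SeparableSpace H] [MeasurableSpace H] [BorelSpace H]
    [NormedAddCommGroup Ξ] [InnerProductSpace ℝ Ξ] [CompleteSpace Ξ]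
    [TopologicalSpace.SeparableSpace Ξ]
    [NormedAddCommGroup K] [InnerProductSpace ℝ K] [CompleteSpace K]
    [TopologicalSpace.SeparableSpace K]
    (b : HilbertBasis ℕ ℝ H)
    (T : ℝ → H →L[ℝ] H)
    (hT0 : T 0 = ContinuousLinearMap.id ℝ H)
    (hTsg : ∀ s t : ℝ, 0 ≤ s → 0 ≤ t → T (s + t) = (T s).comp (T t))
    (hTcont : ∀ x : H, ContinuousOn (fun t : ℝ => T t x) (Ici 0))
    (M ω : ℝ) (hM : 1 ≤ M)
    (hTbd : ∀ t : ℝ, 0 ≤ t → ‖T t‖ ≤ M * Real.exp (ω * t))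
    (σ : Ξ →L[ℝ] H)
    (htrace : ∀ s : ℝ, 0 < s → trB b (opS T σ s) < ⊤)
    (htraceint : ∀ t : ℝ, 0 ≤ t → (∫⁻ s in Ioc (0 : ℝ) t, trB b (opS T σ s)) < ⊤)
    -- the Gaussian measures N t = N_{Q_t}, t > 0
    (N : ℝ → Measure H)
    (hNprob : ∀ t : ℝ, 0 < t → IsProbabilityMeasure (N t))
    (hNgauss : ∀ t : ℝ, 0 < t → ∀ ξ : H,
      (N t).map (fun y : H => ⟪y, ξ⟫) =
        ProbabilityTheory.gaussianReal 0
          (Real.toNNReal (∫ s in Ioc (0 : ℝ) t, ⟪opS T σ s ξ, ξ⟫)))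
    -- G : D(G) ⊆ K → H closed and densely defined
    (domG : Submodule ℝ K) (Gop : domG →ₗ[ℝ] H)
    (hdense : Dense (domG : Set K))
    (hclosed : IsClosed {p : K × H | ∃ h : p.1 ∈ domG, Gop ⟨p.1, h⟩ = p.2})
    -- e^{tA}G extends to a bounded operator Ebar t
    (Ebar : ℝ → K →L[ℝ] H)
    (hEbar : ∀ t : ℝ, 0 < t → ∀ k : domG, Ebar t (k : K) = T t (Gop k))
    -- sqrtQ t is the nonnegative self-adjoint square root Q_t^{1/2} of Q_t
    (sqrtQ : ℝ → H →L[ℝ] H)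
    (hsqrtQsa : ∀ t : ℝ, 0 < t → ∀ ξ η : H, ⟪sqrtQ t ξ, η⟫ = ⟪ξ, sqrtQ t η⟫)
    (hsqrtQpos : ∀ t : ℝ, 0 < t → ∀ ξ : H, 0 ≤ ⟪sqrtQ t ξ, ξ⟫)
    (hsqrtQsq : ∀ t : ℝ, 0 < t → ∀ ξ η : H,
      ⟪sqrtQ t (sqrtQ t ξ), η⟫ = ∫ s in Ioc (0 : ℝ) t, ⟪opS T σ s ξ, η⟫)
    -- range(Ebar t) ⊆ Q_t^{1/2}(H), and Γ t = Q_t^{-1/2} Ebar t (minimal-norm section)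
    (Γ : ℝ → K →L[ℝ] H)
    (hΓ : ∀ t : ℝ, 0 < t → ∀ k : K, sqrtQ t (Γ t k) = Ebar t k)
    (hΓmin : ∀ t : ℝ, 0 < t → ∀ k : K, ∀ h : H, sqrtQ t h = Ebar t k → ‖Γ t k‖ ≤ ‖h‖) :
    ∀ m : ℝ, 0 ≤ m → ∀ (φ : H → ℝ) (gφ : H → H),
      (Continuous φ ∧ ∃ C : ℝ, ∀ x : H, |φ x| ≤ C * (1 + ‖x‖ ^ m)) →
      (∀ x : H, HasGradientAt φ (gφ x) x) →
      (Continuous gφ ∧ ∃ C : ℝ, ∀ x : H, ‖gφ x‖ ≤ C * (1 + ‖x‖ ^ m)) →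
      ∀ t : ℝ, 0 < t →
        ∃ D : H → K,
          (∀ x : H, HasGFrechetGradientAt domG Gop
            (fun x' : H => ∫ y, φ (T t x' + y) ∂(N t)) (D x) x) ∧
          ∀ (x : H) (k : K),
            ⟪D x, k⟫ = ∫ y, ⟪gφ (y + T t x), Ebar t k⟫ ∂(N t) := by
  intro m hm φ gφ hφ hgrad hgφ t ht
  obtain ⟨hφc, Cφ, hφb⟩ := hφ
  obtain ⟨hgc, Cgb, hgb⟩ := hgφ
  haveI : IsProbabilityMeasure (N t) := hNprob t ht
  haveI : SecondCountableTopology H := UniformSpace.secondCountable_of_separable H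
  haveI : Nonempty H := ⟨0⟩
  -- marginal variances
  obtain ⟨w, hwdef⟩ : ∃ w : ℕ → ℝ≥0,
      w = fun i => (∫ s in Ioc (0:ℝ) t, ⟪opS T σ s (b i), b i⟫).toNNReal := ⟨_, rfl⟩
  have hmap : ∀ i, (N t).map (fun y => ⟪y, b i⟫) = gaussianReal 0 (w i) := fun i => by
    rw [hwdef]; exact hNgauss t ht (b i)
  have hSnn : ∀ (s : ℝ) (ξ : H), 0 ≤ ⟪opS T σ s ξ, ξ⟫ := by
    intro s ξ
    have h1 : opS T σ s ξ
        = ((T s).comp σ) ((ContinuousLinearMap.adjoint ((T s).comp σ)) ξ) := rfl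
    rw [h1, real_inner_comm, ← ContinuousLinearMap.adjoint_inner_left]
    exact real_inner_self_nonneg
  have hW : (∑' i, ((w i : ℝ≥0∞))) < ⊤ := by
    have h1 : ∀ i, ((w i : ℝ≥0∞)) ≤ ∫⁻ s in Ioc (0:ℝ) t,
        ENNReal.ofReal ⟪opS T σ s (b i), b i⟫ := by
      intro i
      have hco : ((w i : ℝ≥0∞))
          = ENNReal.ofReal (∫ s in Ioc (0:ℝ) t, ⟪opS T σ s (b i), b i⟫) := by rw [hwdef]; rfl
      rw [hco]
      by_cases hi : IntegrableOn (fun s => ⟪opS T σ s (b i), b i⟫) (Ioc (0:ℝ) t) volume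
      · rw [ofReal_integral_eq_lintegral_ofReal hi (ae_of_all _ fun s => hSnn s (b i))]
      · rw [integral_undef hi]; simp
    calc ∑' i, ((w i : ℝ≥0∞))
        ≤ ∑' i, ∫⁻ s in Ioc (0:ℝ) t, ENNReal.ofReal ⟪opS T σ s (b i), b i⟫ :=
          ENNReal.tsum_le_tsum h1
      _ ≤ ∫⁻ s in Ioc (0:ℝ) t, ∑' i, ENNReal.ofReal ⟪opS T σ s (b i), b i⟫ :=
          my_tsum_lintegral_le _ _
      _ = ∫⁻ s in Ioc (0:ℝ) t, trB b (opS T σ s) := by unfold trB; rfl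
      _ < ⊤ := htraceint t ht.le
  have hmom : ∀ n : ℕ, 1 ≤ n → ∫⁻ y, ENNReal.ofReal (‖y‖ ^ (2*n)) ∂(N t) < ⊤ := by
    intro n hn
    refine lt_of_le_of_lt (my_moment_bound (N t) b w hmap n hn) ?_
    exact ENNReal.mul_lt_top (my_gaussian_moment_std n) (ENNReal.pow_lt_top hW)
  have hint1m : Integrable (fun y : H => (1 + ‖y‖) ^ m) (N t) :=
    my_integrable_one_add_norm (N t) hmom m hm
  have hφnorm : ∀ x : H, ‖φ x‖ ≤ Cφ * (1 + ‖x‖ ^ m) := by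
    intro x; rw [Real.norm_eq_abs]; exact hφb x
  have hφint : ∀ z : H, Integrable (fun y => φ (z + y)) (N t) := by
    intro z
    refine my_integrable_growth (N t) hint1m _ (hφc.comp (continuous_const.add continuous_id))
      (Cφ * (1 + (‖z‖+1) ^ m)) (fun y => ?_)
    exact my_growth_shift hm (norm_nonneg z) φ hφnorm z y (le_refl _)
  have hgint : ∀ z : H, Integrable (fun y => gφ (y + z)) (N t) := by
    intro z
    refine my_integrable_growth (N t) hint1m _ (hgc.comp (continuous_id.add continuous_const))
      (Cgb * (1 + (‖z‖+1) ^ m)) (fun y => ?_)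
    rw [show y + z = z + y from add_comm y z]
    exact my_growth_shift hm (norm_nonneg z) gφ hgb z y (le_refl _)
  have bullet2 : ∀ (x : H) (k : K),
      ⟪ContinuousLinearMap.adjoint (Ebar t) (∫ y, gφ (y + T t x) ∂(N t)), k⟫
        = ∫ y, ⟪gφ (y + T t x), Ebar t k⟫ ∂(N t) := by
    intro x k
    rw [ContinuousLinearMap.adjoint_inner_left]
    have h1 := (innerSL ℝ (Ebar t k)).integral_comp_comm (hgint (T t x))
    have h2 : ∀ v : H, (innerSL ℝ (Ebar t k)) v = ⟪v, Ebar t k⟫ := fun v =>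
      real_inner_comm v (Ebar t k)
    simp only [h2] at h1
    exact h1.symm
  refine ⟨fun x => ContinuousLinearMap.adjoint (Ebar t) (∫ y, gφ (y + T t x) ∂(N t)),
    fun x => ?_, bullet2⟩
  have key : ∀ c : ℝ, 0 ≤ c → ∀ ε : ℝ, 0 < ε → ∃ δ : ℝ, 0 < δ ∧ ∀ s : ℝ, s ≠ 0 → |s| < δ →
      ∀ k : domG, ‖(k : K)‖ ≤ c →
      |s⁻¹ * ((∫ y, φ (T t (x + s • Gop k) + y) ∂(N t)) - ∫ y, φ (T t x + y) ∂(N t)) -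
        ⟪ContinuousLinearMap.adjoint (Ebar t) (∫ y, gφ (y + T t x) ∂(N t)), (k : K)⟫| ≤ ε := by
    set z0 := T t x with hz0def
    obtain ⟨F, hFmeas, hFge, hFle, hF0⟩ := my_F_exists gφ hgc z0
    have hFb : ∀ nn (y : H), F nn y
        ≤ ENNReal.ofReal ((2 * (Cgb * (1 + (‖z0‖ + 1 + 1) ^ m))) * (1 + ‖y‖) ^ m) := by
      intro nn y
      refine hFle nn y _ ?_
      intro h hh
      have hzh : ‖z0 + h‖ ≤ ‖z0‖ + 1 := by
        calc ‖z0 + h‖ ≤ ‖z0‖ + ‖h‖ := norm_add_le _ _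
          _ ≤ ‖z0‖ + 1 := by linarith
      have h1 : ‖gφ ((z0 + y) + h)‖
          ≤ (Cgb * (1 + (‖z0‖ + 1 + 1) ^ m)) * (1 + ‖y‖) ^ m := by
        have h1' := my_growth_shift hm (by positivity : (0:ℝ) ≤ ‖z0‖ + 1) gφ hgb (z0 + h) y hzh
        rw [show z0 + y + h = z0 + h + y from by abel]
        exact h1'
      have h2 : ‖gφ (z0 + y)‖ ≤ (Cgb * (1 + (‖z0‖ + 1 + 1) ^ m)) * (1 + ‖y‖) ^ m :=
        my_growth_shift hm (by positivity : (0:ℝ) ≤ ‖z0‖ + 1) gφ hgb z0 y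
          (by linarith [norm_nonneg z0])
      calc ‖gφ ((z0 + y) + h) - gφ (z0 + y)‖ ≤ ‖gφ ((z0 + y) + h)‖ + ‖gφ (z0 + y)‖ :=
            norm_sub_le _ _
        _ ≤ (2 * (Cgb * (1 + (‖z0‖ + 1 + 1) ^ m))) * (1 + ‖y‖) ^ m := by linarith
    have hDomInt : ∫⁻ y, ENNReal.ofReal
        ((2 * (Cgb * (1 + (‖z0‖ + 1 + 1) ^ m))) * (1 + ‖y‖) ^ m) ∂(N t) < ⊤ := by
      have hi := hint1m.const_mul (2 * (Cgb * (1 + (‖z0‖ + 1 + 1) ^ m)))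
      refine lt_of_le_of_lt (lintegral_mono fun y => Real.ofReal_le_enorm _) ?_
      exact hi.2
    have hFlim : Tendsto (fun nn => ∫⁻ y, F nn y ∂(N t)) atTop (𝓝 0) := by
      have h3 := tendsto_lintegral_of_dominated_convergence (μ := N t)
        (F := F) (f := fun _ => (0:ℝ≥0∞))
        (bound := fun y => ENNReal.ofReal ((2 * (Cgb * (1 + (‖z0‖ + 1 + 1) ^ m))) * (1 + ‖y‖) ^ m))
        hFmeas (fun nn => ae_of_all _ (hFb nn)) hDomInt.ne (ae_of_all _ hF0)
      simpa using h3
    intro c hc ε hε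
    have hCE0 : (0:ℝ) ≤ c * ‖Ebar t‖ := mul_nonneg hc (norm_nonneg _)
    have hεd : (0:ℝ) < ε / (c * ‖Ebar t‖ + 1) := by positivity
    obtain ⟨nn, hnn⟩ := (hFlim.eventually_lt_const (ENNReal.ofReal_pos.mpr hεd)).exists
    refine ⟨(1/(nn+1:ℝ)) / (c * ‖Ebar t‖ + 1), by positivity, ?_⟩
    intro s hs0 hsδ k hk
    set ek := Ebar t (k : K) with hekdef
    have hekn : ‖ek‖ ≤ c * ‖Ebar t‖ := by
      calc ‖ek‖ ≤ ‖Ebar t‖ * ‖(k:K)‖ := (Ebar t).le_opNorm _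
        _ ≤ ‖Ebar t‖ * c := mul_le_mul_of_nonneg_left hk (norm_nonneg _)
        _ = c * ‖Ebar t‖ := mul_comm _ _
    have hA : T t (x + s • (Gop k)) = z0 + s • ek := by
      rw [map_add, ContinuousLinearMap.map_smul, hekdef, hEbar t ht k, ← hz0def]
    set u := s • ek with hudef
    set ee : H → ℝ := fun y => s⁻¹ * (φ ((z0 + u) + y) - φ (z0 + y)) - ⟪gφ (z0 + y), ek⟫
      with heedef
    have hginnerint : Integrable (fun y => ⟪gφ (z0 + y), ek⟫) (N t) := by
      refine my_integrable_growth (N t) hint1m _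
        ((hgc.comp (continuous_const.add continuous_id)).inner continuous_const)
        ((Cgb * (1 + (‖z0‖+1) ^ m)) * ‖ek‖) (fun y => ?_)
      rw [Real.norm_eq_abs]
      refine (abs_real_inner_le_norm _ _).trans ?_
      calc ‖gφ (z0 + y)‖ * ‖ek‖ ≤ ((Cgb * (1 + (‖z0‖+1) ^ m)) * (1+‖y‖) ^ m) * ‖ek‖ :=
            mul_le_mul_of_nonneg_right
              (my_growth_shift hm (norm_nonneg z0) gφ hgb z0 y (le_refl _)) (norm_nonneg _)
        _ = ((Cgb * (1 + (‖z0‖+1) ^ m)) * ‖ek‖) * (1+‖y‖) ^ m := by ring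
    have hD : s⁻¹ * ((∫ y, φ (T t (x + s • Gop k) + y) ∂(N t)) - ∫ y, φ (z0 + y) ∂(N t)) -
        ⟪ContinuousLinearMap.adjoint (Ebar t) (∫ y, gφ (y + z0) ∂(N t)), (k : K)⟫
        = ∫ y, ee y ∂(N t) := by
      have hb2 : ⟪ContinuousLinearMap.adjoint (Ebar t) (∫ y, gφ (y + z0) ∂(N t)), (k : K)⟫
          = ∫ y, ⟪gφ (z0 + y), ek⟫ ∂(N t) := by
        rw [hz0def, bullet2 x k, ← hekdef]
        congr 1
        funext y
        rw [add_comm y (T t x), ← hz0def]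
      rw [hA, hb2]
      have h4 : (∫ y, φ ((z0 + u) + y) ∂(N t)) - ∫ y, φ (z0 + y) ∂(N t)
          = ∫ y, (φ ((z0 + u) + y) - φ (z0 + y)) ∂(N t) :=
        (integral_sub (hφint _) (hφint _)).symm
      have hint1 : Integrable (fun y => s⁻¹ * (φ ((z0 + u) + y) - φ (z0 + y))) (N t) := by
        have h5 := ((hφint (z0+u)).sub (hφint z0)).const_mul s⁻¹
        simpa using h5
      rw [h4, ← integral_const_mul, ← integral_sub hint1 hginnerint]
    have heebound : ∀ y : H, ENNReal.ofReal |ee y|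
        ≤ ENNReal.ofReal (c * ‖Ebar t‖) * F nn y := by
      intro y
      by_cases hek0 : ek = 0
      · have h5 : ee y = 0 := by
          simp only [heedef, hudef, hek0, smul_zero, add_zero, sub_self, mul_zero,
            inner_zero_right, sub_zero]
        rw [h5]
        simp
      · have hekpos : 0 < c * ‖Ebar t‖ := lt_of_lt_of_le (norm_pos_iff.mpr hek0) hekn
        -- FTC identity
        have hFTC : φ ((z0 + y) + u) - φ (z0 + y)
            = ∫ r in (0:ℝ)..1, ⟪gφ ((z0 + y) + r • u), u⟫ := by
          have hline : ∀ r : ℝ, HasDerivAt (fun r : ℝ => (z0 + y) + r • u) u r := fun r => by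
            simpa using ((hasDerivAt_id r).smul_const u).const_add (z0 + y)
          have hder : ∀ r ∈ uIcc (0:ℝ) 1,
              HasDerivAt (fun r : ℝ => φ ((z0 + y) + r • u)) ⟪gφ ((z0 + y) + r • u), u⟫ r := by
            intro r _
            have h6 := ((hgrad ((z0 + y) + r • u)).hasFDerivAt).comp_hasDerivAt r (hline r)
            simpa [InnerProductSpace.toDual_apply_apply, Function.comp_def] using h6
          have hci : IntervalIntegrable (fun r : ℝ => ⟪gφ ((z0 + y) + r • u), u⟫) volume 0 1 := by
            refine Continuous.intervalIntegrable ?_ _ _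
            exact (hgc.comp (continuous_const.add (continuous_id.smul continuous_const))).inner
              continuous_const
          rw [intervalIntegral.integral_eq_sub_of_hasDerivAt hder hci]
          simp
        have heq : ee y = ∫ r in (0:ℝ)..1, (⟪gφ ((z0 + y) + r • u), ek⟫ - ⟪gφ (z0 + y), ek⟫) := by
          have h7 : ee y = s⁻¹ * (φ ((z0 + y) + u) - φ (z0 + y)) - ⟪gφ (z0 + y), ek⟫ := by
            simp only [heedef]
            rw [show z0 + u + y = z0 + y + u from by abel]
          have h8 : ∀ r : ℝ, s⁻¹ * ⟪gφ ((z0 + y) + r • u), u⟫ = ⟪gφ ((z0 + y) + r • u), ek⟫ := by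
            intro r
            rw [hudef, real_inner_smul_right, inv_mul_cancel_left₀ hs0]
          rw [h7, hFTC, ← intervalIntegral.integral_const_mul]
          have hi1 : IntervalIntegrable (fun r : ℝ => s⁻¹ * ⟪gφ ((z0 + y) + r • u), u⟫)
              volume 0 1 := by
            refine Continuous.intervalIntegrable ?_ _ _
            exact continuous_const.mul ((hgc.comp (continuous_const.add
              (continuous_id.smul continuous_const))).inner continuous_const)
          have hi2 : IntervalIntegrable (fun _ : ℝ => ⟪gφ (z0 + y), ek⟫) volume 0 1 :=
            intervalIntegrable_const
          rw [show ⟪gφ (z0 + y), ek⟫ = ∫ _ in (0:ℝ)..1, ⟪gφ (z0 + y), ek⟫ from by simp]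
          rw [← intervalIntegral.integral_sub hi1 hi2]
          refine intervalIntegral.integral_congr fun r _ => ?_
          simp only [h8 r]
          simp
        -- increments are inside the ball of radius 1/(nn+1)
        have hbF : ∀ r : ℝ, r ∈ Set.uIoc (0:ℝ) 1 →
            (‖gφ ((z0 + y) + r • u) - gφ (z0 + y)‖₊ : ℝ≥0∞) ≤ F nn y := by
          intro r hr
          rw [Set.uIoc_of_le zero_le_one] at hr
          have hr1 : |r| ≤ 1 := by
            rw [abs_of_pos hr.1]; exact hr.2
          have h9 : r • u = ((r * s)) • ek := by rw [hudef, smul_smul]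
          rw [h9]
          refine hFge nn y ((r * s) • ek) ?_
          rw [norm_smul, Real.norm_eq_abs, abs_mul]
          have h10 : |r| * |s| * ‖ek‖ ≤ |s| * (c * ‖Ebar t‖) := by
            have h10a : |r| * |s| * ‖ek‖ ≤ |s| * ‖ek‖ := by
              have h10c := mul_nonneg (mul_nonneg (sub_nonneg.mpr hr1) (abs_nonneg s))
                (norm_nonneg ek)
              nlinarith [h10c]
            have h10b : |s| * ‖ek‖ ≤ |s| * (c * ‖Ebar t‖) :=
              mul_le_mul_of_nonneg_left hekn (abs_nonneg s)
            exact h10a.trans h10b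
          refine lt_of_le_of_lt h10 ?_
          have hpos : (0:ℝ) < c * ‖Ebar t‖ + 1 := by positivity
          have h11 := mul_lt_mul_of_pos_right hsδ hpos
          rw [div_mul_cancel₀ _ hpos.ne'] at h11
          exact lt_of_le_of_lt (mul_le_mul_of_nonneg_left
            (le_add_of_nonneg_right zero_le_one) (abs_nonneg s)) h11
        rcases eq_or_ne (F nn y) ⊤ with hFt | hFt
        · rw [hFt, ENNReal.mul_top (by simp [ENNReal.ofReal_eq_zero, not_le, hekpos])]
          exact le_top
        · have hreal : ∀ r ∈ Set.uIoc (0:ℝ) 1,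
              ‖⟪gφ ((z0 + y) + r • u), ek⟫ - ⟪gφ (z0 + y), ek⟫‖
                ≤ (F nn y).toReal * (c * ‖Ebar t‖) := by
            intro r hr
            rw [← inner_sub_left, Real.norm_eq_abs]
            refine (abs_real_inner_le_norm _ _).trans ?_
            refine mul_le_mul ?_ hekn (norm_nonneg _) ENNReal.toReal_nonneg
            have h12 := hbF r hr
            have h13 := ENNReal.toReal_mono hFt h12
            simpa using h13
          have h14 : |ee y| ≤ ((F nn y).toReal * (c * ‖Ebar t‖)) * |1 - 0| := by
            rw [heq, ← Real.norm_eq_abs]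
            exact intervalIntegral.norm_integral_le_of_norm_le_const hreal
          calc ENNReal.ofReal |ee y| ≤ ENNReal.ofReal ((c * ‖Ebar t‖) * (F nn y).toReal) := by
                refine ENNReal.ofReal_le_ofReal ?_
                calc |ee y| ≤ ((F nn y).toReal * (c * ‖Ebar t‖)) * |1 - 0| := h14
                  _ = (c * ‖Ebar t‖) * (F nn y).toReal := by
                      rw [show |(1:ℝ) - 0| = 1 by norm_num]; ring
            _ = ENNReal.ofReal (c * ‖Ebar t‖) * ENNReal.ofReal ((F nn y).toReal) :=
                ENNReal.ofReal_mul hCE0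
            _ = ENNReal.ofReal (c * ‖Ebar t‖) * F nn y := by rw [ENNReal.ofReal_toReal hFt]
    -- final assembly
    have hfinal : |∫ y, ee y ∂(N t)| ≤ ε := by
      have h15 : |∫ y, ee y ∂(N t)| ≤ (∫⁻ y, ENNReal.ofReal ‖ee y‖ ∂(N t)).toReal := by
        rw [← Real.norm_eq_abs]
        exact norm_integral_le_lintegral_norm _
      refine h15.trans ?_
      have h16 : (∫⁻ y, ENNReal.ofReal ‖ee y‖ ∂(N t))
          ≤ ENNReal.ofReal (c * ‖Ebar t‖) * ENNReal.ofReal (ε/(c * ‖Ebar t‖ + 1)) := by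
        calc ∫⁻ y, ENNReal.ofReal ‖ee y‖ ∂(N t)
            ≤ ∫⁻ y, ENNReal.ofReal (c * ‖Ebar t‖) * F nn y ∂(N t) := by
              refine lintegral_mono fun y => ?_
              rw [Real.norm_eq_abs]
              exact heebound y
          _ = ENNReal.ofReal (c * ‖Ebar t‖) * ∫⁻ y, F nn y ∂(N t) :=
              lintegral_const_mul _ (hFmeas nn)
          _ ≤ _ := mul_le_mul_right hnn.le _
      calc (∫⁻ y, ENNReal.ofReal ‖ee y‖ ∂(N t)).toReal
          ≤ (ENNReal.ofReal (c * ‖Ebar t‖) * ENNReal.ofReal (ε/(c * ‖Ebar t‖ + 1))).toReal := by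
            refine ENNReal.toReal_mono ?_ h16
            exact ENNReal.mul_ne_top ENNReal.ofReal_ne_top ENNReal.ofReal_ne_top
        _ = (c * ‖Ebar t‖) * (ε/(c * ‖Ebar t‖ + 1)) := by
            rw [← ENNReal.ofReal_mul hCE0, ENNReal.toReal_ofReal (by positivity)]
        _ ≤ ε := by
            have hpos : (0:ℝ) < c * ‖Ebar t‖ + 1 := by positivity
            have h17 : (c * ‖Ebar t‖) * (ε/(c * ‖Ebar t‖ + 1))
                = ε * ((c * ‖Ebar t‖)/(c * ‖Ebar t‖ + 1)) := by ring
            have h18 : (c * ‖Ebar t‖)/(c * ‖Ebar t‖ + 1) ≤ 1 := by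
              rw [div_le_one hpos]
              linarith
            calc (c * ‖Ebar t‖) * (ε/(c * ‖Ebar t‖ + 1))
                = ε * ((c * ‖Ebar t‖)/(c * ‖Ebar t‖ + 1)) := h17
              _ ≤ ε * 1 := mul_le_mul_of_nonneg_left h18 hε.le
              _ = ε := mul_one ε
    rw [hD]
    exact hfinal
  constructor
  · intro k
    rw [Metric.tendsto_nhdsWithin_nhds]
    intro ε hε
    obtain ⟨δ, hδ, hkey⟩ := key ‖(k:K)‖ (norm_nonneg _) (ε/2) (half_pos hε)
    refine ⟨δ, hδ, ?_⟩
    intro s hs hsd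
    have hs0 : s ≠ 0 := by simpa using hs
    have hsd' : |s| < δ := by
      rw [Real.dist_eq, sub_zero] at hsd; exact hsd
    have h2 := hkey s hs0 hsd' k (le_refl _)
    rw [Real.dist_eq]
    calc |s⁻¹ * ((∫ y, φ (T t (x + s • Gop k) + y) ∂(N t)) - ∫ y, φ (T t x + y) ∂(N t)) -
        ⟪ContinuousLinearMap.adjoint (Ebar t) (∫ y, gφ (y + T t x) ∂(N t)), (k : K)⟫| ≤ ε/2 := h2
      _ < ε := half_lt_self hε
  · intro ε hε
    obtain ⟨δ, hδ, hkey⟩ := key 1 zero_le_one ε hε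
    exact ⟨δ, hδ, fun s hs hsd k hk => hkey s hs hsd k hk⟩
end
end
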